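/- arXiv:2411.04115 — 6 statements merged into one kernel-verified Lean document; each statement's English description precedes it below -/
import Mathlib

section
/- For any Boolean function f: {0,1}^ℓ → {0,1}, the total online influence of f is at least the variance of the ±1-valued function e(f)(x) = (-1)^{f(x)}; that is, Var(e(f)) ≤ oI[f]. -/
open Finset

def b2r (b : Bool) : ℝ := if b then 1 else 0

noncomputable def condExp {ℓ : ℕ} (f : (Fin ℓ → Bool) → Bool) (i : Fin ℓ) (p : Fin ℓ → Bool)
    (b : Bool) : ℝ :=
  (∑ x : Fin ℓ → Bool, if (∀ j, j < i → x j = p j) ∧ x i = b then b2r (f x) else 0)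
    / 2 ^ (ℓ - (i : ℕ) - 1)

/-- Online influence of coordinate `i`: the expectation over a uniform prefix of the absolute
difference of the conditional expectations of `f` with coordinate `i` set to `1` resp. `0`,
the remaining coordinates being uniform. -/
noncomputable def oI {ℓ : ℕ} (f : (Fin ℓ → Bool) → Bool) (i : Fin ℓ) : ℝ :=
  (∑ p : Fin ℓ → Bool, |condExp f i p true - condExp f i p false|) / 2 ^ ℓ

/-- Total online influence. -/
noncomputable def totalOI {ℓ : ℕ} (f : (Fin ℓ → Bool) → Bool) : ℝ := ∑ i, oI f i

/-- Mean of `f` under the uniform distribution. -/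
noncomputable def meanF {ℓ : ℕ} (f : (Fin ℓ → Bool) → Bool) : ℝ :=
  (∑ x : Fin ℓ → Bool, b2r (f x)) / 2 ^ ℓ

/-- `e(f)(x) = (-1)^(f x)`. -/
noncomputable def esign {ℓ : ℕ} (f : (Fin ℓ → Bool) → Bool) (x : Fin ℓ → Bool) : ℝ :=
  if f x then -1 else 1

/-- Variance of `e(f) = (-1)^f` under the uniform distribution. -/
noncomputable def varE {ℓ : ℕ} (f : (Fin ℓ → Bool) → Bool) : ℝ :=
  (∑ x : Fin ℓ → Bool, esign f x ^ 2) / 2 ^ ℓ - ((∑ x : Fin ℓ → Bool, esign f x) / 2 ^ ℓ) ^ 2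

noncomputable def myg {ℓ : ℕ} (f : (Fin ℓ → Bool) → Bool) (i : ℕ) (x : Fin ℓ → Bool) : ℝ :=
  (∑ y : Fin ℓ → Bool, if ∀ j : Fin ℓ, (j : ℕ) < i → y j = x j then b2r (f y) else 0)
    / 2 ^ (ℓ - i)

lemma myg_zero {ℓ : ℕ} (f : (Fin ℓ → Bool) → Bool) (x : Fin ℓ → Bool) :
    myg f 0 x = meanF f := by
  simp [myg, meanF]

lemma myg_last {ℓ : ℕ} (f : (Fin ℓ → Bool) → Bool) (x : Fin ℓ → Bool) :
    myg f ℓ x = b2r (f x) := by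
  have h : ∀ y : Fin ℓ → Bool, (∀ j : Fin ℓ, (j : ℕ) < ℓ → y j = x j) ↔ y = x := by
    intro y
    constructor
    · intro h; funext j; exact h j j.isLt
    · intro h j _; rw [h]
  simp only [myg, Nat.sub_self, pow_zero, div_one]
  rw [Finset.sum_congr rfl fun y _ => if_congr (h y) rfl rfl]
  simp

lemma myg_succ {ℓ : ℕ} (f : (Fin ℓ → Bool) → Bool) (i : Fin ℓ) (x : Fin ℓ → Bool) :
    myg f ((i : ℕ) + 1) x = condExp f i x (x i) := by
  have h : ∀ y : Fin ℓ → Bool,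
      (∀ j : Fin ℓ, (j : ℕ) < (i : ℕ) + 1 → y j = x j) ↔
        ((∀ j, j < i → y j = x j) ∧ y i = x i) := by
    intro y
    constructor
    · intro h
      exact ⟨fun j hj => h j (Nat.lt_succ_of_lt hj), h i (Nat.lt_succ_self _)⟩
    · rintro ⟨h1, h2⟩ j hj
      rcases Nat.lt_succ_iff_lt_or_eq.mp hj with hj | hj
      · exact h1 j hj
      · rw [show j = i from Fin.ext hj]; exact h2
  rw [myg, condExp, Nat.sub_sub]
  congr 1
  exact Finset.sum_congr rfl fun y _ => if_congr (h y) rfl rfl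

lemma myg_split {ℓ : ℕ} (f : (Fin ℓ → Bool) → Bool) (i : Fin ℓ) (x : Fin ℓ → Bool) :
    myg f (i : ℕ) x = (condExp f i x true + condExp f i x false) / 2 := by
  have hsplit : ∀ y : Fin ℓ → Bool,
      (if ∀ j : Fin ℓ, (j : ℕ) < (i : ℕ) → y j = x j then b2r (f y) else 0) =
      (if (∀ j, j < i → y j = x j) ∧ y i = true then b2r (f y) else 0) +
      (if (∀ j, j < i → y j = x j) ∧ y i = false then b2r (f y) else 0) := by
    intro y
    have : (∀ j : Fin ℓ, (j : ℕ) < (i : ℕ) → y j = x j) ↔ (∀ j, j < i → y j = x j) :=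
      Iff.rfl
    rw [if_congr this rfl rfl]
    cases hyi : y i <;> by_cases hP : ∀ j, j < i → y j = x j <;> simp [hP, hyi]
  have hpow : (2 : ℝ) ^ (ℓ - (i : ℕ)) = 2 ^ (ℓ - (i : ℕ) - 1) * 2 := by
    rw [← pow_succ]
    congr 1
    omega
  rw [myg, Finset.sum_congr rfl fun y _ => hsplit y, Finset.sum_add_distrib, hpow,
    condExp, condExp]
  have h2 : (2 : ℝ) ^ (ℓ - (i : ℕ) - 1) ≠ 0 := by positivity
  field_simp

lemma myg_step {ℓ : ℕ} (f : (Fin ℓ → Bool) → Bool) (i : Fin ℓ) (x : Fin ℓ → Bool) :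
    |myg f ((i : ℕ) + 1) x - myg f (i : ℕ) x| =
      |condExp f i x true - condExp f i x false| / 2 := by
  rw [myg_succ, myg_split]
  cases h : x i
  · rw [show condExp f i x false - (condExp f i x true + condExp f i x false) / 2 =
      -((condExp f i x true - condExp f i x false) / 2) by ring, abs_neg, abs_div]
    norm_num
  · rw [show condExp f i x true - (condExp f i x true + condExp f i x false) / 2 =
      (condExp f i x true - condExp f i x false) / 2 by ring, abs_div]
    norm_num

lemma tele_bound {ℓ : ℕ} (f : (Fin ℓ → Bool) → Bool) (x : Fin ℓ → Bool) :
    |b2r (f x) - meanF f| ≤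
      ∑ i ∈ Finset.range ℓ, |myg f (i + 1) x - myg f i x| := by
  rw [← myg_last f x, ← myg_zero f x,
    ← Finset.sum_range_sub (fun i => myg f i x)]
  exact Finset.abs_sum_le_sum_abs _ _

lemma card_cube {ℓ : ℕ} : (∑ _x : Fin ℓ → Bool, (1 : ℝ)) = 2 ^ ℓ := by
  simp [Finset.sum_const, Finset.card_univ]

/-- Poincaré-style lower bound: `Var(e(f)) ≤ oI[f]`. -/
theorem var_le_totalOI {ℓ : ℕ} (f : (Fin ℓ → Bool) → Bool) : varE f ≤ totalOI f := by
  set μ := meanF f with hμdef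
  have hN : (0 : ℝ) < 2 ^ ℓ := by positivity
  set S := ∑ x : Fin ℓ → Bool, b2r (f x) with hSdef
  have hS0 : 0 ≤ S := Finset.sum_nonneg fun x _ => by unfold b2r; positivity
  have hS1 : S ≤ 2 ^ ℓ := by
    calc S ≤ ∑ _x : Fin ℓ → Bool, (1 : ℝ) :=
          Finset.sum_le_sum fun x _ => by unfold b2r; split <;> norm_num
      _ = 2 ^ ℓ := card_cube
  have hμ0 : 0 ≤ μ := by rw [hμdef, meanF]; positivity
  have hμ1 : μ ≤ 1 := by
    rw [hμdef, meanF, div_le_one hN]; exact hS1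
  have hSμ : S = 2 ^ ℓ * μ := by
    rw [hμdef, meanF]; field_simp; exact hSdef
  -- upper bound on the L1 distance via online influences
  have key : ∑ x : Fin ℓ → Bool, |b2r (f x) - μ| ≤ 2 ^ ℓ * totalOI f / 2 := by
    calc ∑ x : Fin ℓ → Bool, |b2r (f x) - μ|
        ≤ ∑ x : Fin ℓ → Bool, ∑ i ∈ Finset.range ℓ, |myg f (i + 1) x - myg f i x| :=
          Finset.sum_le_sum fun x _ => tele_bound f x
      _ = ∑ i ∈ Finset.range ℓ, ∑ x : Fin ℓ → Bool, |myg f (i + 1) x - myg f i x| :=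
          Finset.sum_comm
      _ = ∑ i : Fin ℓ, ∑ x : Fin ℓ → Bool, |myg f ((i : ℕ) + 1) x - myg f (i : ℕ) x| :=
          (Fin.sum_univ_eq_sum_range (fun i => ∑ x : Fin ℓ → Bool,
            |myg f (i + 1) x - myg f i x|) ℓ).symm
      _ = ∑ i : Fin ℓ, ∑ x : Fin ℓ → Bool,
            |condExp f i x true - condExp f i x false| / 2 := by
          exact Finset.sum_congr rfl fun i _ =>
            Finset.sum_congr rfl fun x _ => myg_step f i x
      _ = ∑ i : Fin ℓ, 2 ^ ℓ * oI f i / 2 := by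
          refine Finset.sum_congr rfl fun i _ => ?_
          rw [← Finset.sum_div, oI]
          field_simp
      _ = 2 ^ ℓ * totalOI f / 2 := by
          rw [totalOI, Finset.mul_sum, Finset.sum_div]
  -- exact value of the L1 distance
  have hL1 : ∑ x : Fin ℓ → Bool, |b2r (f x) - μ| = (1 - 2 * μ) * S + 2 ^ ℓ * μ := by
    have hterm : ∀ x : Fin ℓ → Bool, |b2r (f x) - μ| = b2r (f x) * (1 - 2 * μ) + μ := by
      intro x
      unfold b2r
      cases hfx : f x
      · simp only [hfx, Bool.false_eq_true, if_false]
        rw [zero_sub, abs_neg, abs_of_nonneg hμ0]; ring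
      · simp only [hfx, if_true]
        rw [abs_of_nonneg (by linarith)]; ring
    rw [Finset.sum_congr rfl fun x _ => hterm x, Finset.sum_add_distrib,
      ← Finset.sum_mul, ← hSdef]
    rw [show (∑ _x : Fin ℓ → Bool, μ) = (∑ _x : Fin ℓ → Bool, (1:ℝ)) * μ by
      rw [Finset.sum_mul]; simp, card_cube]
    ring
  -- value of the variance
  have hvar : varE f = 4 * μ - 4 * μ ^ 2 := by
    have h1 : (∑ x : Fin ℓ → Bool, esign f x ^ 2) = 2 ^ ℓ := by
      rw [show (∑ x : Fin ℓ → Bool, esign f x ^ 2) = ∑ _x : Fin ℓ → Bool, (1:ℝ) from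
        Finset.sum_congr rfl fun x _ => by unfold esign; split <;> norm_num, card_cube]
    have h2 : (∑ x : Fin ℓ → Bool, esign f x) = 2 ^ ℓ - 2 * S := by
      rw [show (∑ x : Fin ℓ → Bool, esign f x)
          = ∑ x : Fin ℓ → Bool, ((1:ℝ) - 2 * b2r (f x)) from
        Finset.sum_congr rfl fun x _ => by unfold esign b2r; split <;> norm_num]
      rw [Finset.sum_sub_distrib, card_cube, ← Finset.mul_sum, ← hSdef]
    rw [varE, h1, h2, hSμ]
    field_simp
    ring
  -- conclude
  have key2 : (2:ℝ) ^ ℓ * (2 * μ - 2 * μ ^ 2) ≤ 2 ^ ℓ * (totalOI f / 2) := by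
    calc (2:ℝ) ^ ℓ * (2 * μ - 2 * μ ^ 2) = (1 - 2 * μ) * (2 ^ ℓ * μ) + 2 ^ ℓ * μ := by ring
      _ = ∑ x : Fin ℓ → Bool, |b2r (f x) - μ| := by rw [hL1, hSμ]
      _ ≤ 2 ^ ℓ * totalOI f / 2 := key
      _ = 2 ^ ℓ * (totalOI f / 2) := by ring
  have := (mul_le_mul_iff_right₀ hN).mp key2
  rw [hvar]
  linarith
end

section
/- For any Boolean function f: {0,1}^ℓ → {0,1}, the total online influence satisfies oI[f] ≤ sqrt(ℓ · Var(e(f))), where e(f)(x) = (-1)^{f(x)}. -/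
open Finset

noncomputable def Sfun {ℓ : ℕ} (f : (Fin ℓ → Bool) → Bool) (i : ℕ) (p : Fin ℓ → Bool) : ℝ :=
  (∑ x : Fin ℓ → Bool, if ∀ j : Fin ℓ, (j : ℕ) < i → x j = p j then b2r (f x) else 0)
    / 2 ^ (ℓ - i)

lemma Sfun_zero {ℓ : ℕ} (f : (Fin ℓ → Bool) → Bool) (p : Fin ℓ → Bool) :
    Sfun f 0 p = meanF f := by
  simp [Sfun, meanF]

lemma Sfun_top {ℓ : ℕ} (f : (Fin ℓ → Bool) → Bool) (p : Fin ℓ → Bool) :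
    Sfun f ℓ p = b2r (f p) := by
  have h : ∀ x : Fin ℓ → Bool, (∀ j : Fin ℓ, (j : ℕ) < ℓ → x j = p j) ↔ x = p := by
    intro x
    constructor
    · intro h; funext j; exact h j j.isLt
    · rintro rfl; intro j _; rfl
  simp only [Sfun, h]
  simp

lemma Sfun_succ {ℓ : ℕ} (f : (Fin ℓ → Bool) → Bool) (i : Fin ℓ) (p : Fin ℓ → Bool) :
    Sfun f ((i : ℕ) + 1) p = condExp f i p (p i) := by
  have h : ∀ x : Fin ℓ → Bool,
      (∀ j : Fin ℓ, (j : ℕ) < (i : ℕ) + 1 → x j = p j) ↔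
        ((∀ j, j < i → x j = p j) ∧ x i = p i) := by
    intro x
    constructor
    · intro h
      exact ⟨fun j hj => h j (by omega), h i (by omega)⟩
    · rintro ⟨h1, h2⟩ j hj
      rcases Nat.lt_succ_iff_lt_or_eq.mp hj with h | h
      · exact h1 j h
      · have : j = i := Fin.ext h
        subst this; exact h2
  simp only [Sfun, h, condExp]
  rw [Nat.sub_sub]

lemma condExp_sum {ℓ : ℕ} (f : (Fin ℓ → Bool) → Bool) (i : Fin ℓ) (p : Fin ℓ → Bool) :
    condExp f i p true + condExp f i p false = 2 * Sfun f (i : ℕ) p := by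
  have hnum : (∑ x : Fin ℓ → Bool, if (∀ j, j < i → x j = p j) ∧ x i = true then b2r (f x) else 0)
      + (∑ x : Fin ℓ → Bool, if (∀ j, j < i → x j = p j) ∧ x i = false then b2r (f x) else 0)
      = ∑ x : Fin ℓ → Bool, if ∀ j : Fin ℓ, (j : ℕ) < (i : ℕ) → x j = p j then b2r (f x) else 0 := by
    rw [← Finset.sum_add_distrib]
    apply Finset.sum_congr rfl
    intro x _
    by_cases hA : ∀ j, j < i → x j = p j
    · have hA' : ∀ j : Fin ℓ, (j : ℕ) < (i : ℕ) → x j = p j := hA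
      rw [if_pos hA']
      cases hx : x i
      · rw [if_neg (by simp), if_pos ⟨hA, rfl⟩, zero_add]
      · rw [if_pos ⟨hA, rfl⟩, if_neg (by simp), add_zero]
    · have hA' : ¬ ∀ j : Fin ℓ, (j : ℕ) < (i : ℕ) → x j = p j := hA
      rw [if_neg hA', if_neg (fun h => hA h.1), if_neg (fun h => hA h.1), add_zero]
  have hpow : (2 : ℝ) ^ (ℓ - (i : ℕ)) = 2 * 2 ^ (ℓ - (i : ℕ) - 1) := by
    rw [← pow_succ']
    congr 1
    omega
  unfold condExp Sfun
  rw [← add_div, hnum, hpow]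
  have h2 : (2 : ℝ) ^ (ℓ - (i : ℕ) - 1) ≠ 0 := by positivity
  field_simp

lemma condExp_update {ℓ : ℕ} (f : (Fin ℓ → Bool) → Bool) (i : Fin ℓ) (p : Fin ℓ → Bool)
    (c b : Bool) : condExp f i (Function.update p i c) b = condExp f i p b := by
  have h : ∀ x : Fin ℓ → Bool,
      ((∀ j, j < i → x j = Function.update p i c j) ∧ x i = b) ↔
        ((∀ j, j < i → x j = p j) ∧ x i = b) := by
    intro x
    apply and_congr_left'
    apply forall_congr'
    intro j
    apply imp_congr_right
    intro hj
    rw [Function.update_of_ne (ne_of_lt hj)]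
  simp only [condExp, h]

lemma sum_sq_succ {ℓ : ℕ} (f : (Fin ℓ → Bool) → Bool) (i : Fin ℓ) :
    2 * ∑ p : Fin ℓ → Bool, (Sfun f ((i : ℕ) + 1) p) ^ 2
      = ∑ p : Fin ℓ → Bool, ((condExp f i p true) ^ 2 + (condExp f i p false) ^ 2) := by
  have inv : Function.Involutive (fun p : Fin ℓ → Bool => Function.update p i (! p i)) := by
    intro p; funext j
    by_cases h : j = i
    · subst h; simp
    · simp [Function.update_of_ne h]
  have hflip : ∑ p : Fin ℓ → Bool, (condExp f i p (p i)) ^ 2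
      = ∑ p : Fin ℓ → Bool, (condExp f i p (! p i)) ^ 2 := by
    rw [← Equiv.sum_comp (inv.toPerm _) (fun q => (condExp f i q (q i)) ^ 2)]
    apply Finset.sum_congr rfl
    intro p _
    simp only [Function.Involutive.coe_toPerm]
    rw [Function.update_self, condExp_update]
  simp only [Sfun_succ]
  rw [two_mul]
  nth_rewrite 2 [hflip]
  rw [← Finset.sum_add_distrib]
  apply Finset.sum_congr rfl
  intro p _
  cases hp : p i <;> simp [hp] <;> ring

lemma step_eq {ℓ : ℕ} (f : (Fin ℓ → Bool) → Bool) (i : Fin ℓ) :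
    ∑ p : Fin ℓ → Bool, ((Sfun f ((i : ℕ) + 1) p) ^ 2 - (Sfun f (i : ℕ) p) ^ 2)
      = ∑ p : Fin ℓ → Bool, (condExp f i p true - condExp f i p false) ^ 2 / 4 := by
  have h2 := sum_sq_succ f i
  have h3 : ∀ p : Fin ℓ → Bool, Sfun f (i : ℕ) p
      = (condExp f i p true + condExp f i p false) / 2 := by
    intro p
    have := condExp_sum f i p
    linarith
  rw [Finset.sum_sub_distrib]
  have h4 : ∑ p : Fin ℓ → Bool, (Sfun f ((i : ℕ) + 1) p) ^ 2
      = (∑ p : Fin ℓ → Bool, ((condExp f i p true) ^ 2 + (condExp f i p false) ^ 2)) / 2 := by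
    linarith
  rw [h4]
  simp_rw [h3]
  rw [Finset.sum_div, ← Finset.sum_sub_distrib]
  apply Finset.sum_congr rfl
  intro p _
  ring

lemma main_identity {ℓ : ℕ} (f : (Fin ℓ → Bool) → Bool) :
    ∑ i : Fin ℓ, ∑ p : Fin ℓ → Bool, (condExp f i p true - condExp f i p false) ^ 2 / 4
      = (∑ p : Fin ℓ → Bool, b2r (f p)) - 2 ^ ℓ * (meanF f) ^ 2 := by
  have htel := Finset.sum_range_sub (fun i => ∑ p : Fin ℓ → Bool, (Sfun f i p) ^ 2) ℓ
  have hfin : ∑ i : Fin ℓ, ∑ p : Fin ℓ → Bool, ((Sfun f ((i : ℕ) + 1) p) ^ 2 - (Sfun f (i : ℕ) p) ^ 2)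
      = ∑ i ∈ Finset.range ℓ, ((∑ p : Fin ℓ → Bool, (Sfun f (i + 1) p) ^ 2)
          - ∑ p : Fin ℓ → Bool, (Sfun f i p) ^ 2) := by
    rw [← Fin.sum_univ_eq_sum_range (fun i => (∑ p : Fin ℓ → Bool, (Sfun f (i + 1) p) ^ 2)
          - ∑ p : Fin ℓ → Bool, (Sfun f i p) ^ 2) ℓ]
    apply Finset.sum_congr rfl
    intro i _
    rw [Finset.sum_sub_distrib]
  have hstep : ∑ i : Fin ℓ, ∑ p : Fin ℓ → Bool, (condExp f i p true - condExp f i p false) ^ 2 / 4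
      = ∑ i : Fin ℓ, ∑ p : Fin ℓ → Bool, ((Sfun f ((i : ℕ) + 1) p) ^ 2 - (Sfun f (i : ℕ) p) ^ 2) :=
    (Finset.sum_congr rfl (fun i _ => (step_eq f i).symm))
  rw [hstep, hfin, htel]
  have hT : ∑ p : Fin ℓ → Bool, (Sfun f ℓ p) ^ 2 = ∑ p : Fin ℓ → Bool, b2r (f p) := by
    apply Finset.sum_congr rfl
    intro p _
    rw [Sfun_top]
    cases f p <;> simp [b2r]
  have h0 : ∑ p : Fin ℓ → Bool, (Sfun f 0 p) ^ 2 = 2 ^ ℓ * (meanF f) ^ 2 := by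
    simp_rw [Sfun_zero]
    rw [Finset.sum_const]
    simp [Finset.card_univ]
  rw [hT, h0]

lemma varE_eq {ℓ : ℕ} (f : (Fin ℓ → Bool) → Bool) :
    varE f = 4 * meanF f - 4 * (meanF f) ^ 2 := by
  have h1 : ∑ x : Fin ℓ → Bool, esign f x ^ 2 = 2 ^ ℓ := by
    have : ∀ x : Fin ℓ → Bool, esign f x ^ 2 = 1 := by
      intro x; unfold esign; cases hx : f x <;> simp
    simp_rw [this]
    simp [Finset.card_univ]
  have h2 : ∑ x : Fin ℓ → Bool, esign f x = 2 ^ ℓ - 2 * ∑ x : Fin ℓ → Bool, b2r (f x) := by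
    have he : ∀ x : Fin ℓ → Bool, esign f x = 1 - 2 * b2r (f x) := by
      intro x; unfold esign b2r; cases f x <;> norm_num
    simp_rw [he]
    rw [Finset.sum_sub_distrib, ← Finset.mul_sum]
    simp [Finset.card_univ]
  have hc : (2 : ℝ) ^ ℓ ≠ 0 := by positivity
  unfold varE meanF
  rw [h1, h2]
  field_simp
  ring

lemma sum_ED {ℓ : ℕ} (f : (Fin ℓ → Bool) → Bool) :
    ∑ i : Fin ℓ, (∑ p : Fin ℓ → Bool, (condExp f i p true - condExp f i p false) ^ 2) / 2 ^ ℓ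
      = varE f := by
  have hm := main_identity f
  have hc : (2 : ℝ) ^ ℓ ≠ 0 := by positivity
  have hb : (∑ p : Fin ℓ → Bool, b2r (f p)) = meanF f * 2 ^ ℓ := by
    unfold meanF; field_simp
  rw [varE_eq, ← Finset.sum_div, div_eq_iff hc]
  have hm2 : ∑ i : Fin ℓ, ∑ p : Fin ℓ → Bool, (condExp f i p true - condExp f i p false) ^ 2
      = 4 * ((∑ p : Fin ℓ → Bool, b2r (f p)) - 2 ^ ℓ * (meanF f) ^ 2) := by
    rw [← hm, Finset.mul_sum]
    apply Finset.sum_congr rfl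
    intro i _
    rw [Finset.mul_sum]
    apply Finset.sum_congr rfl
    intro p _
    ring
  rw [hm2, hb]
  ring

/-- Upper bound: `oI[f] ≤ sqrt(ℓ · Var(e(f)))`. -/
theorem totalOI_le_sqrt {ℓ : ℕ} (f : (Fin ℓ → Bool) → Bool) :
    totalOI f ≤ Real.sqrt (ℓ * varE f) := by
  have hcard : ((Finset.univ : Finset (Fin ℓ → Bool)).card : ℝ) = 2 ^ ℓ := by
    simp [Finset.card_univ]
  have key : ∀ i : Fin ℓ, (oI f i) ^ 2
      ≤ (∑ p : Fin ℓ → Bool, (condExp f i p true - condExp f i p false) ^ 2) / 2 ^ ℓ := by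
    intro i
    have hcs := Finset.sum_mul_sq_le_sq_mul_sq Finset.univ (fun _ : Fin ℓ → Bool => (1 : ℝ))
      (fun p => |condExp f i p true - condExp f i p false|)
    simp only [one_mul, one_pow, sq_abs, Finset.sum_const, nsmul_eq_mul, mul_one] at hcs
    rw [hcard] at hcs
    unfold oI
    rw [div_pow, div_le_div_iff₀ (by positivity) (by positivity)]
    calc (∑ p : Fin ℓ → Bool, |condExp f i p true - condExp f i p false|) ^ 2 * 2 ^ ℓ
        ≤ (2 ^ ℓ * ∑ p : Fin ℓ → Bool, (condExp f i p true - condExp f i p false) ^ 2) * 2 ^ ℓ := by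
          apply mul_le_mul_of_nonneg_right hcs (by positivity)
      _ = (∑ p : Fin ℓ → Bool, (condExp f i p true - condExp f i p false) ^ 2) * ((2:ℝ) ^ ℓ) ^ 2 := by
          ring
  have hnn : 0 ≤ totalOI f := by
    apply Finset.sum_nonneg
    intro i _
    unfold oI
    apply div_nonneg (Finset.sum_nonneg fun p _ => abs_nonneg _) (by positivity)
  have h2 : (totalOI f) ^ 2 ≤ ℓ * varE f := by
    have hcs2 := Finset.sum_mul_sq_le_sq_mul_sq Finset.univ (fun _ : Fin ℓ => (1 : ℝ)) (oI f)
    simp only [one_mul, one_pow, Finset.sum_const, Finset.card_univ, Fintype.card_fin,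
      nsmul_eq_mul, mul_one] at hcs2
    have hsum : ∑ i : Fin ℓ, (oI f i) ^ 2 ≤ varE f := by
      rw [← sum_ED f]
      exact Finset.sum_le_sum fun i _ => key i
    calc (totalOI f) ^ 2 ≤ (ℓ : ℝ) * ∑ i : Fin ℓ, (oI f i) ^ 2 := hcs2
      _ ≤ (ℓ : ℝ) * varE f := by
          apply mul_le_mul_of_nonneg_left hsum (by positivity)
  have hy : 0 ≤ (ℓ : ℝ) * varE f := le_trans (sq_nonneg _) h2
  rw [Real.le_sqrt hnn hy]
  exact h2
end

section
/- If f: {0,1}^ℓ → {0,1} is unate (for each coordinate i, f is either nondecreasing or nonincreasing in that coordinate), then for every coordinate i, the online influence oI_i[f] equals the ordinary influence I_i[f]. -/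
open Finset

/-- Ordinary influence of coordinate `i`: the probability that flipping coordinate `i`
changes the value of `f`. -/
noncomputable def infl {ℓ : ℕ} (f : (Fin ℓ → Bool) → Bool) (i : Fin ℓ) : ℝ :=
  (∑ x : Fin ℓ → Bool, if f x ≠ f (Function.update x i (!x i)) then (1 : ℝ) else 0) / 2 ^ ℓ

section Aux
variable {ℓ : ℕ}

variable {ℓ : ℕ}

noncomputable def gfun (f : (Fin ℓ → Bool) → Bool) (i : Fin ℓ) (x : Fin ℓ → Bool) : ℝ :=
  b2r (f (Function.update x i true)) - b2r (f (Function.update x i false))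

lemma gfun_update (f : (Fin ℓ → Bool) → Bool) (i : Fin ℓ) (x : Fin ℓ → Bool) (b : Bool) :
    gfun f i (Function.update x i b) = gfun f i x := by
  simp [gfun, Function.update_idem]

def flipI (i : Fin ℓ) : (Fin ℓ → Bool) → (Fin ℓ → Bool) := fun x => Function.update x i (!x i)

lemma flipI_invol (i : Fin ℓ) : Function.Involutive (flipI i) := by
  intro x
  ext j
  rcases eq_or_ne j i with rfl | hj
  · simp [flipI]
  · simp [flipI, Function.update_of_ne hj]

lemma sum_flip (i : Fin ℓ) (F : (Fin ℓ → Bool) → ℝ) :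
    ∑ x : Fin ℓ → Bool, F (flipI i x) = ∑ x : Fin ℓ → Bool, F x :=
  Fintype.sum_equiv (flipI_invol i).toPerm _ _ (fun _ => rfl)

lemma sum_false_eq (f : (Fin ℓ → Bool) → Bool) (i : Fin ℓ) (p : Fin ℓ → Bool) :
    (∑ x : Fin ℓ → Bool, if (∀ j, j < i → x j = p j) ∧ x i = false then b2r (f x) else 0)
    = ∑ x : Fin ℓ → Bool,
        if (∀ j, j < i → x j = p j) ∧ x i = true then b2r (f (Function.update x i false)) else 0 := by
  rw [← sum_flip i (fun x => if (∀ j, j < i → x j = p j) ∧ x i = true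
      then b2r (f (Function.update x i false)) else 0)]
  apply Finset.sum_congr rfl
  intro x _
  have hcoord : ∀ j, j < i → flipI i x j = x j := fun j hj =>
    Function.update_of_ne (Fin.ne_of_lt hj) _ _
  have h1 : flipI i x i = !x i := Function.update_self _ _ _
  have h2 : Function.update (flipI i x) i false = Function.update x i false := by
    simp [flipI, Function.update_idem]
  have hiff : ((∀ j, j < i → flipI i x j = p j) ∧ flipI i x i = true)
      ↔ ((∀ j, j < i → x j = p j) ∧ x i = false) := by
    refine and_congr ?_ ?_
    · exact forall_congr' fun j => imp_congr_right fun hj => by rw [hcoord j hj]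
    · rw [h1]; simp
  simp only [hiff, h2]
  split_ifs with h
  · rw [← h.2, Function.update_eq_self]
  · rfl

lemma sum_true_eq (f : (Fin ℓ → Bool) → Bool) (i : Fin ℓ) (p : Fin ℓ → Bool) :
    (∑ x : Fin ℓ → Bool, if (∀ j, j < i → x j = p j) ∧ x i = true then b2r (f x) else 0)
    = ∑ x : Fin ℓ → Bool,
        if (∀ j, j < i → x j = p j) ∧ x i = true then b2r (f (Function.update x i true)) else 0 := by
  apply Finset.sum_congr rfl
  intro x _
  split_ifs with h
  · rw [← h.2, Function.update_eq_self]
  · rfl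


lemma condExp_diff (f : (Fin ℓ → Bool) → Bool) (i : Fin ℓ) (p : Fin ℓ → Bool) :
    condExp f i p true - condExp f i p false
    = (∑ x : Fin ℓ → Bool, if (∀ j, j < i → x j = p j) ∧ x i = true then gfun f i x else 0)
        / 2 ^ (ℓ - (i : ℕ) - 1) := by
  rw [condExp, condExp, div_sub_div_same, sum_true_eq, sum_false_eq, ← Finset.sum_sub_distrib]
  congr 1
  apply Finset.sum_congr rfl
  intro x _
  split_ifs <;> simp [gfun]

lemma abs_sum_if {α : Type*} [Fintype α] (g : α → ℝ) (c : α → Prop) [DecidablePred c]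
    (hs : (∀ x, 0 ≤ g x) ∨ (∀ x, g x ≤ 0)) :
    |∑ x : α, if c x then g x else 0| = ∑ x : α, if c x then |g x| else 0 := by
  rcases hs with h | h
  · rw [abs_of_nonneg (Finset.sum_nonneg fun x _ => by split_ifs; exacts [h x, le_refl 0])]
    exact Finset.sum_congr rfl fun x _ => by split_ifs; exacts [(abs_of_nonneg (h x)).symm, rfl]
  · rw [abs_of_nonpos (Finset.sum_nonpos fun x _ => by split_ifs; exacts [h x, le_refl 0]),
      ← Finset.sum_neg_distrib]
    exact Finset.sum_congr rfl fun x _ => by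
      split_ifs
      · rw [abs_of_nonpos (h x)]
      · simp

lemma card_compl_lt (ℓ : ℕ) (i : Fin ℓ) : Fintype.card {j : Fin ℓ // ¬ (j < i)} = ℓ - i := by
  rw [Fintype.card_subtype_compl]
  congr 1
  · simp
  rw [Fintype.card_subtype]
  have : filter (fun x : Fin ℓ => x < i) univ = Iio i := by ext j; simp
  rw [this, Fin.card_Iio]

noncomputable def prefixEquiv {ℓ : ℕ} (i : Fin ℓ) (x : Fin ℓ → Bool) :
    {p : Fin ℓ → Bool // ∀ j, j < i → x j = p j} ≃ ({j : Fin ℓ // ¬ (j < i)} → Bool) where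
  toFun p j := p.1 j.1
  invFun q := ⟨fun j => if h : j < i then x j else q ⟨j, h⟩, fun j hj => by simp [hj]⟩
  left_inv p := by
    ext j
    dsimp only
    split
    · exact p.2 j ‹_›
    · rfl
  right_inv q := by
    ext j
    simp [j.2]

lemma card_prefix {ℓ : ℕ} (i : Fin ℓ) (x : Fin ℓ → Bool) :
    (univ.filter (fun p : Fin ℓ → Bool => ∀ j, j < i → x j = p j)).card = 2 ^ (ℓ - (i : ℕ)) := by
  rw [← Fintype.card_subtype, Fintype.card_congr (prefixEquiv i x), Fintype.card_fun,
    Fintype.card_bool, card_compl_lt]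

lemma sum_if_true_half (i : Fin ℓ) (G : (Fin ℓ → Bool) → ℝ)
    (hG : ∀ x b, G (Function.update x i b) = G x) :
    (∑ x : Fin ℓ → Bool, if x i = true then G x else 0) * 2 = ∑ x : Fin ℓ → Bool, G x := by
  have hflip : (∑ x : Fin ℓ → Bool, if x i = true then G x else 0)
      = ∑ x : Fin ℓ → Bool, if x i = false then G x else 0 := by
    rw [← sum_flip i (fun x => if x i = false then G x else 0)]
    apply Finset.sum_congr rfl
    intro x _
    have h1 : flipI i x i = !x i := Function.update_self _ _ _
    have h2 : G (flipI i x) = G x := hG x _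
    rw [h1, h2]
    cases hxi : x i <;> simp
  rw [mul_two]
  nth_rewrite 2 [hflip]
  rw [← Finset.sum_add_distrib]
  apply Finset.sum_congr rfl
  intro x _
  cases hxi : x i <;> simp

lemma double_sum (i : Fin ℓ) (G : (Fin ℓ → Bool) → ℝ)
    (hG : ∀ x b, G (Function.update x i b) = G x) :
    (∑ p : Fin ℓ → Bool, ∑ x : Fin ℓ → Bool,
        if (∀ j, j < i → x j = p j) ∧ x i = true then G x else 0)
    = 2 ^ (ℓ - (i : ℕ) - 1) * ∑ x : Fin ℓ → Bool, G x := by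
  rw [Finset.sum_comm]
  have step : ∀ x : Fin ℓ → Bool,
      (∑ p : Fin ℓ → Bool, if (∀ j, j < i → x j = p j) ∧ x i = true then G x else 0)
      = (if x i = true then G x else 0) * 2 ^ (ℓ - (i : ℕ)) := by
    intro x
    by_cases hxi : x i = true
    · simp only [hxi, and_true, if_true]
      rw [← Finset.sum_filter, Finset.sum_const, card_prefix, nsmul_eq_mul, mul_comm]
      norm_num
    · simp [hxi]
  rw [Finset.sum_congr rfl fun x _ => step x, ← Finset.sum_mul]
  have hpow : (2 : ℝ) ^ (ℓ - (i : ℕ)) = 2 ^ (ℓ - (i : ℕ) - 1) * 2 := by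
    rw [← pow_succ]
    congr 1
    omega
  rw [hpow, ← mul_assoc, mul_comm _ ((2:ℝ) ^ (ℓ - (i : ℕ) - 1)), mul_assoc,
    sum_if_true_half i G hG]

lemma ind_eq_abs (f : (Fin ℓ → Bool) → Bool) (i : Fin ℓ) (x : Fin ℓ → Bool) :
    (if f x ≠ f (Function.update x i (!x i)) then (1 : ℝ) else 0) = |gfun f i x| := by
  cases hxi : x i
  · have h0 : Function.update x i false = x := by
      rw [← hxi]; exact Function.update_eq_self _ _
    simp only [Bool.not_false, gfun, h0]
    cases ha : f x <;> cases hb : f (Function.update x i true) <;>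
      simp [b2r, ha, hb]
  · have h0 : Function.update x i true = x := by
      rw [← hxi]; exact Function.update_eq_self _ _
    simp only [Bool.not_true, gfun, h0]
    cases ha : f x <;> cases hb : f (Function.update x i false) <;>
      simp [b2r, ha, hb]




end Aux

/-- For unate `f` (each coordinate nondecreasing or nonincreasing), the online influence of
every coordinate equals its ordinary influence. -/
theorem oI_eq_infl_of_unate {ℓ : ℕ} (f : (Fin ℓ → Bool) → Bool)
    (hf : ∀ i : Fin ℓ,
      (∀ x, f (Function.update x i false) ≤ f (Function.update x i true)) ∨
      (∀ x, f (Function.update x i true) ≤ f (Function.update x i false))) :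
    ∀ i : Fin ℓ, oI f i = infl f i := by
  intro i
  have hsign : (∀ x, 0 ≤ gfun f i x) ∨ (∀ x, gfun f i x ≤ 0) := by
    rcases hf i with h | h
    · left
      intro x
      have := h x
      cases ha : f (Function.update x i false) <;> cases hb : f (Function.update x i true) <;>
        simp_all [gfun, b2r]
      all_goals exact absurd this (by decide)
    · right
      intro x
      have := h x
      cases ha : f (Function.update x i false) <;> cases hb : f (Function.update x i true) <;>
        simp_all [gfun, b2r]
      all_goals exact absurd this (by decide)
  have hpow : (0 : ℝ) < 2 ^ (ℓ - (i : ℕ) - 1) := by positivity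
  rw [oI, infl]
  congr 1
  calc (∑ p : Fin ℓ → Bool, |condExp f i p true - condExp f i p false|)
      = ∑ p : Fin ℓ → Bool, (∑ x : Fin ℓ → Bool,
          if (∀ j, j < i → x j = p j) ∧ x i = true then |gfun f i x| else 0)
          / 2 ^ (ℓ - (i : ℕ) - 1) := by
        apply Finset.sum_congr rfl
        intro p _
        rw [condExp_diff, abs_div, abs_of_pos hpow,
          abs_sum_if (gfun f i) (fun x => (∀ j, j < i → x j = p j) ∧ x i = true) hsign]
    _ = (∑ p : Fin ℓ → Bool, ∑ x : Fin ℓ → Bool,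
          if (∀ j, j < i → x j = p j) ∧ x i = true then |gfun f i x| else 0)
          / 2 ^ (ℓ - (i : ℕ) - 1) := by rw [Finset.sum_div]
    _ = (2 ^ (ℓ - (i : ℕ) - 1) * ∑ x : Fin ℓ → Bool, |gfun f i x|) / 2 ^ (ℓ - (i : ℕ) - 1) := by
        rw [double_sum i (fun x => |gfun f i x|) (fun x b => by show |gfun f i (Function.update x i b)| = |gfun f i x|; rw [gfun_update])]
    _ = ∑ x : Fin ℓ → Bool, |gfun f i x| := by
        rw [mul_div_assoc, mul_comm]; field_simp
    _ = ∑ x : Fin ℓ → Bool, if f x ≠ f (Function.update x i (!x i)) then (1 : ℝ) else 0 :=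
        Finset.sum_congr rfl fun x _ => (ind_eq_abs f i x).symm
end

section
/- Let ℓ = k + 2^k and let ADDR: {0,1}^k × ({0,1})^{2^k} → {0,1} be the address function defined by ADDR(a, y) = y_{bin(a)}, where bin(a) interprets a as an index in {0,...,2^k - 1}, with the address bits a appearing first in the input order. Then every coordinate i ∈ [ℓ] has online influence oI_i[ADDR] ≤ 2/ℓ (up to a universal constant: oI_i[ADDR] = O(1/ℓ)), and ADDR is balanced, i.e., E[ADDR] = 1/2 under the uniform distribution. -/
open Finset

/-- The binary index encoded by the first `k` (address) bits. -/
def addrIdx (k : ℕ) {m : ℕ} (z : Fin (k + m) → Bool) : ℕ :=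
  ∑ j : Fin k, if z (Fin.castLE (Nat.le_add_right k m) j) then 2 ^ (j : ℕ) else 0

lemma addrIdx_lt (k : ℕ) (z : Fin (k + 2 ^ k) → Bool) : addrIdx k z < 2 ^ k := by
  have h : ∀ j : Fin k, (if z (Fin.castLE (Nat.le_add_right k (2 ^ k)) j)
      then 2 ^ (j : ℕ) else 0) ≤ 2 ^ (j : ℕ) := by
    intro j; split <;> simp
  calc addrIdx k z ≤ ∑ j : Fin k, 2 ^ (j : ℕ) := Finset.sum_le_sum fun j _ => h j
    _ = 2 ^ k - 1 := by
        rw [Fin.sum_univ_eq_sum_range]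
        have := Nat.geomSum_eq (le_refl 2) k
        simp [this]
    _ < 2 ^ k := by have : 0 < 2 ^ k := (by positivity); omega

/-- The address function on `ℓ = k + 2^k` bits: the first `k` bits index one of the
remaining `2^k` data bits, whose value is output. -/
def ADDR (k : ℕ) (z : Fin (k + 2 ^ k) → Bool) : Bool :=
  z ⟨k + addrIdx k z, by have := addrIdx_lt k z; omega⟩

lemma b2r_not (b : Bool) : b2r (!b) = 1 - b2r b := by cases b <;> simp [b2r]

lemma card_agree {n : ℕ} (T : Finset (Fin n)) (q : Fin n → Bool) :
    (univ.filter (fun x : Fin n → Bool => ∀ j ∈ T, x j = q j)).card = 2 ^ (n - T.card) := by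
  have e : {x : Fin n → Bool // ∀ j ∈ T, x j = q j} ≃ ({j : Fin n // j ∉ T} → Bool) :=
  { toFun := fun x j => x.1 j.1
    invFun := fun g => ⟨fun j => if h : j ∈ T then q j else g ⟨j, h⟩, fun j hj => by simp [hj]⟩
    left_inv := fun x => by
      ext j
      by_cases h : j ∈ T
      · simp [h, x.2 j h]
      · simp [h]
    right_inv := fun g => by
      ext j
      simp [j.2] }
  have h1 : (univ.filter (fun x : Fin n → Bool => ∀ j ∈ T, x j = q j)).card
      = Fintype.card {x : Fin n → Bool // ∀ j ∈ T, x j = q j} := (Fintype.card_subtype _).symm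
  rw [h1, Fintype.card_congr e, Fintype.card_fun]
  congr 1
  rw [Fintype.card_subtype]
  have h2 : (univ.filter (fun x : Fin n => x ∉ T)) = Tᶜ := by ext x; simp
  rw [h2, Finset.card_compl, Fintype.card_fin]

lemma card_S {n : ℕ} (i : Fin n) (p : Fin n → Bool) (b : Bool) :
    (univ.filter (fun x : Fin n → Bool => (∀ j, j < i → x j = p j) ∧ x i = b)).card
      = 2 ^ (n - i - 1) := by
  have hf : (univ.filter (fun x : Fin n → Bool => (∀ j, j < i → x j = p j) ∧ x i = b))
      = (univ.filter (fun x : Fin n → Bool => ∀ j ∈ Finset.Iic i, x j = (Function.update p i b) j)) := by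
    apply Finset.filter_congr
    intro x _
    constructor
    · rintro ⟨h1, h2⟩ j hj
      rcases lt_or_eq_of_le (Finset.mem_Iic.mp hj) with h | h
      · rw [Function.update_of_ne (ne_of_lt h), h1 j h]
      · subst h; simp [h2]
    · intro h
      constructor
      · intro j hj
        have := h j (Finset.mem_Iic.mpr hj.le)
        rwa [Function.update_of_ne (ne_of_lt hj)] at this
      · have := h i (Finset.mem_Iic.mpr le_rfl)
        simpa using this
  rw [hf, card_agree, Fin.card_Iic]
  rw [Nat.sub_sub]

lemma sum_b2r_half {n : ℕ} (S : Finset (Fin n → Bool)) (f : (Fin n → Bool) → Bool)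
    (σ : (Fin n → Bool) → (Fin n → Bool))
    (hmem : ∀ x ∈ S, σ x ∈ S) (hinv : ∀ x ∈ S, σ (σ x) = x)
    (hflip : ∀ x ∈ S, f (σ x) = !f x) :
    ∑ x ∈ S, b2r (f x) = (S.card : ℝ) / 2 := by
  have h1 : ∑ x ∈ S, b2r (f (σ x)) = ∑ x ∈ S, b2r (f x) := by
    exact Finset.sum_nbij' σ σ hmem hmem hinv hinv (fun x hx => rfl)
  have h2 : ∑ x ∈ S, b2r (f (σ x)) = ∑ x ∈ S, (1 - b2r (f x)) := by
    apply Finset.sum_congr rfl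
    intro x hx
    rw [hflip x hx, b2r_not]
  rw [h2] at h1
  rw [Finset.sum_sub_distrib, Finset.sum_const, nsmul_eq_mul, mul_one] at h1
  linarith


lemma addrIdx_congr {k m : ℕ} {x y : Fin (k + m) → Bool}
    (h : ∀ j : Fin (k + m), (j : ℕ) < k → x j = y j) : addrIdx k x = addrIdx k y := by
  unfold addrIdx
  apply Finset.sum_congr rfl
  intro j _
  rw [h _ (by simp)]

def jx (k : ℕ) (x : Fin (k + 2 ^ k) → Bool) : Fin (k + 2 ^ k) :=
  ⟨k + addrIdx k x, by have := addrIdx_lt k x; omega⟩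

lemma ADDR_eq (k : ℕ) (x : Fin (k + 2 ^ k) → Bool) : ADDR k x = x (jx k x) := rfl

noncomputable def flipA (k : ℕ) (x : Fin (k + 2 ^ k) → Bool) : Fin (k + 2 ^ k) → Bool :=
  Function.update x (jx k x) (!(x (jx k x)))

lemma flipA_apply_lt (k : ℕ) (x : Fin (k + 2 ^ k) → Bool) {j : Fin (k + 2 ^ k)}
    (h : (j : ℕ) < k + addrIdx k x) : flipA k x j = x j := by
  apply Function.update_of_ne
  exact Fin.ne_of_val_ne (by simp [jx]; omega)

lemma addrIdx_flipA (k : ℕ) (x : Fin (k + 2 ^ k) → Bool) :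
    addrIdx k (flipA k x) = addrIdx k x := by
  apply addrIdx_congr
  intro j hj
  exact flipA_apply_lt k x (by omega)

lemma jx_flipA (k : ℕ) (x : Fin (k + 2 ^ k) → Bool) : jx k (flipA k x) = jx k x := by
  simp [jx, addrIdx_flipA]

lemma flipA_flipA (k : ℕ) (x : Fin (k + 2 ^ k) → Bool) : flipA k (flipA k x) = x := by
  unfold flipA
  rw [show jx k (Function.update x (jx k x) (!(x (jx k x)))) = jx k x from jx_flipA k x]
  simp [Function.update_idem, Function.update_self, Function.update_eq_self]

lemma ADDR_flipA (k : ℕ) (x : Fin (k + 2 ^ k) → Bool) : ADDR k (flipA k x) = !(ADDR k x) := by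
  rw [ADDR_eq, ADDR_eq, jx_flipA]
  simp [flipA, Function.update_self]
lemma condExp_eq_sum {ℓ : ℕ} (f : (Fin ℓ → Bool) → Bool) (i : Fin ℓ) (p : Fin ℓ → Bool)
    (b : Bool) :
    condExp f i p b = (∑ x ∈ univ.filter
        (fun x : Fin ℓ → Bool => (∀ j, j < i → x j = p j) ∧ x i = b), b2r (f x))
      / 2 ^ (ℓ - (i : ℕ) - 1) := by
  unfold condExp
  rw [Finset.sum_filter]

lemma condExp_ADDR (k : ℕ) (i : Fin (k + 2 ^ k)) (p : Fin (k + 2 ^ k) → Bool) (b : Bool) :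
    condExp (ADDR k) i p b =
      if k ≤ (i : ℕ) ∧ addrIdx k p < (i : ℕ) - k then b2r (p (jx k p))
      else if k ≤ (i : ℕ) ∧ addrIdx k p = (i : ℕ) - k then b2r b
      else 1 / 2 := by
  rw [condExp_eq_sum]
  set S := univ.filter
    (fun x : Fin (k + 2 ^ k) → Bool => (∀ j, j < i → x j = p j) ∧ x i = b) with hS
  have hmemS : ∀ x, x ∈ S ↔ (∀ j, j < i → x j = p j) ∧ x i = b := by
    intro x; simp [hS, Finset.mem_filter]
  have hidx : k ≤ (i : ℕ) → ∀ x ∈ S, addrIdx k x = addrIdx k p := by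
    intro hk x hx
    apply addrIdx_congr
    intro j hj
    exact ((hmemS x).mp hx).1 j (by rw [Fin.lt_def]; omega)
  have hpow : (0 : ℝ) < 2 ^ (k + 2 ^ k - (i : ℕ) - 1) := by positivity
  by_cases h1 : k ≤ (i : ℕ) ∧ addrIdx k p < (i : ℕ) - k
  · rw [if_pos h1]
    have hconst : ∀ x ∈ S, b2r (ADDR k x) = b2r (p (jx k p)) := by
      intro x hx
      rw [ADDR_eq]
      have hjq : jx k x = jx k p := by simp [jx, hidx h1.1 x hx]
      rw [hjq]
      congr 1
      exact ((hmemS x).mp hx).1 (jx k p) (by rw [Fin.lt_def]; simp only [jx]; omega)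
    have hcard := card_S i p b
    rw [Finset.sum_congr rfl hconst, Finset.sum_const, hcard, nsmul_eq_mul]
    push_cast
    field_simp
  · rw [if_neg h1]
    by_cases h2 : k ≤ (i : ℕ) ∧ addrIdx k p = (i : ℕ) - k
    · rw [if_pos h2]
      have hjx : ∀ x ∈ S, jx k x = i := by
        intro x hx
        apply Fin.ext
        simp only [jx, hidx h2.1 x hx, h2.2]
        omega
      have hconst : ∀ x ∈ S, b2r (ADDR k x) = b2r b := by
        intro x hx
        rw [ADDR_eq, hjx x hx, ((hmemS x).mp hx).2]
      have hcard := card_S i p b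
      rw [Finset.sum_congr rfl hconst, Finset.sum_const, hcard, nsmul_eq_mul]
      push_cast
      field_simp
    · rw [if_neg h2]
      have hgt : ∀ x ∈ S, (i : ℕ) < k + addrIdx k x := by
        intro x hx
        by_cases hk : k ≤ (i : ℕ)
        · have he := hidx hk x hx
          have hne : addrIdx k p ≠ (i : ℕ) - k := fun hc => h2 ⟨hk, hc⟩
          have hnl : ¬ addrIdx k p < (i : ℕ) - k := fun hc => h1 ⟨hk, hc⟩
          omega
        · omega
      have hpres : ∀ x ∈ S, ∀ j : Fin (k + 2 ^ k), (j : ℕ) ≤ (i : ℕ) → flipA k x j = x j := by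
        intro x hx j hj
        exact flipA_apply_lt k x (by have := hgt x hx; omega)
      have hmem : ∀ x ∈ S, flipA k x ∈ S := by
        intro x hx
        rw [hmemS]
        obtain ⟨hx1, hx2⟩ := (hmemS x).mp hx
        refine ⟨fun j hj => ?_, ?_⟩
        · rw [hpres x hx j (by rw [Fin.lt_def] at hj; omega), hx1 j hj]
        · rw [hpres x hx i le_rfl, hx2]
      have hhalf := sum_b2r_half S (ADDR k) (flipA k) hmem
        (fun x _ => flipA_flipA k x) (fun x _ => ADDR_flipA k x)
      have hcard := card_S i p b
      rw [hhalf, hcard]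
      push_cast
      field_simp
lemma absDiff_ADDR (k : ℕ) (i : Fin (k + 2 ^ k)) (p : Fin (k + 2 ^ k) → Bool) :
    |condExp (ADDR k) i p true - condExp (ADDR k) i p false| =
      if k ≤ (i : ℕ) ∧ addrIdx k p = (i : ℕ) - k then 1 else 0 := by
  rw [condExp_ADDR, condExp_ADDR]
  by_cases h1 : k ≤ (i : ℕ) ∧ addrIdx k p < (i : ℕ) - k
  · have h2 : addrIdx k p ≠ (i : ℕ) - k := by omega
    simp [h1, h2]
  · rw [if_neg h1, if_neg h1]
    by_cases h2 : k ≤ (i : ℕ) ∧ addrIdx k p = (i : ℕ) - k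
    · simp [h2, b2r]
    · simp [h2]

def idxk (k : ℕ) (a : Fin k → Bool) : ℕ := ∑ j, if a j then 2 ^ (j : ℕ) else 0

lemma idxk_lt (k : ℕ) (a : Fin k → Bool) : idxk k a < 2 ^ k := by
  have h : ∀ j : Fin k, (if a j then 2 ^ (j : ℕ) else 0) ≤ 2 ^ (j : ℕ) := by
    intro j; split <;> simp
  calc idxk k a ≤ ∑ j : Fin k, 2 ^ (j : ℕ) := Finset.sum_le_sum fun j _ => h j
    _ = 2 ^ k - 1 := by
        rw [Fin.sum_univ_eq_sum_range]
        have := Nat.geomSum_eq (le_refl 2) k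
        simp [this]
    _ < 2 ^ k := by have : 0 < 2 ^ k := Nat.pow_pos (n := k) (by norm_num); omega

lemma idxk_eq (k : ℕ) (a : Fin k → Bool) :
    idxk k a = ((finFunctionFinEquiv (fun j => finTwoEquiv.symm (a j)) : Fin (2 ^ k)) : ℕ) := by
  rw [finFunctionFinEquiv_apply]
  apply Finset.sum_congr rfl
  intro j _
  cases h : a j <;> simp [h] <;> rfl

lemma idxk_inj (k : ℕ) : Function.Injective (idxk k) := by
  intro a a' h
  rw [idxk_eq, idxk_eq] at h
  have h2 := finFunctionFinEquiv.injective (Fin.val_injective h)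
  funext j
  exact finTwoEquiv.symm.injective (congrFun h2 j)

lemma sum_idxk (k t : ℕ) (ht : t < 2 ^ k) :
    (∑ a : Fin k → Bool, if idxk k a = t then (1 : ℝ) else 0) = 1 := by
  have hbij : Function.Bijective
      (fun a : Fin k → Bool => (⟨idxk k a, idxk_lt k a⟩ : Fin (2 ^ k))) := by
    rw [Fintype.bijective_iff_injective_and_card]
    constructor
    · intro a a' h
      exact idxk_inj k (by simpa [Fin.ext_iff] using h)
    · simp
  have h := Fintype.sum_bijective _ hbij
    (fun a : Fin k → Bool => if idxk k a = t then (1 : ℝ) else 0)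
    (fun v : Fin (2 ^ k) => if v = ⟨t, ht⟩ then (1 : ℝ) else 0)
    (fun a => by simp [Fin.ext_iff])
  rw [h]
  simp

lemma sum_addrIdx (k t : ℕ) (ht : t < 2 ^ k) :
    (∑ p : Fin (k + 2 ^ k) → Bool, if addrIdx k p = t then (1 : ℝ) else 0)
      = 2 ^ (2 ^ k) := by
  classical
  let E : ((Fin k → Bool) × (Fin (2 ^ k) → Bool)) ≃ (Fin (k + 2 ^ k) → Bool) :=
    (Equiv.sumArrowEquivProdArrow (Fin k) (Fin (2 ^ k)) Bool).symm.trans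
      (Equiv.arrowCongr finSumFinEquiv (Equiv.refl Bool))
  have key : ∀ pr : (Fin k → Bool) × (Fin (2 ^ k) → Bool),
      addrIdx k (E pr) = idxk k pr.1 := by
    intro pr
    unfold addrIdx idxk
    apply Finset.sum_congr rfl
    intro j _
    have hc : Fin.castLE (Nat.le_add_right k (2 ^ k)) j = Fin.castAdd (2 ^ k) j := rfl
    have hE : E pr (Fin.castLE (Nat.le_add_right k (2 ^ k)) j) = pr.1 j := by
      rw [hc]
      simp [E, Equiv.arrowCongr, Equiv.sumArrowEquivProdArrow]
    rw [hE]
  rw [← Equiv.sum_comp E (fun p => if addrIdx k p = t then (1 : ℝ) else 0)]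
  have hrw : ∀ pr : (Fin k → Bool) × (Fin (2 ^ k) → Bool),
      (if addrIdx k (E pr) = t then (1 : ℝ) else 0)
        = (if idxk k pr.1 = t then (1 : ℝ) else 0) := fun pr => by rw [key]
  rw [Finset.sum_congr rfl (fun pr _ => hrw pr), Fintype.sum_prod_type]
  have hin : ∀ a : Fin k → Bool,
      (∑ _d : Fin (2 ^ k) → Bool, (if idxk k a = t then (1 : ℝ) else 0))
        = 2 ^ (2 ^ k) * (if idxk k a = t then (1 : ℝ) else 0) := by
    intro a
    rw [Finset.sum_const, card_univ]
    simp [Fintype.card_fun, nsmul_eq_mul]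
  rw [Finset.sum_congr rfl (fun a _ => hin a), ← Finset.mul_sum, sum_idxk k t ht, mul_one]

lemma oI_ADDR (k : ℕ) (i : Fin (k + 2 ^ k)) :
    oI (ADDR k) i = if k ≤ (i : ℕ) then (1 : ℝ) / 2 ^ k else 0 := by
  unfold oI
  rw [Finset.sum_congr rfl (fun p _ => absDiff_ADDR k i p)]
  by_cases hk : k ≤ (i : ℕ)
  · rw [if_pos hk]
    have ht : (i : ℕ) - k < 2 ^ k := by have := i.isLt; omega
    have hthis : ∀ p : Fin (k + 2 ^ k) → Bool,
        (if k ≤ (i : ℕ) ∧ addrIdx k p = (i : ℕ) - k then (1 : ℝ) else 0)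
          = (if addrIdx k p = (i : ℕ) - k then (1 : ℝ) else 0) := by
      intro p; by_cases h : addrIdx k p = (i : ℕ) - k <;> simp [h, hk]
    rw [Finset.sum_congr rfl (fun p _ => hthis p), sum_addrIdx k _ ht]
    have h2 : (2 : ℝ) ^ (k + 2 ^ k) = 2 ^ k * 2 ^ (2 ^ k) := pow_add 2 k (2 ^ k)
    rw [h2, div_eq_div_iff (by positivity) (by positivity)]
    ring
  · rw [if_neg hk]
    have : ∀ p : Fin (k + 2 ^ k) → Bool,
        (if k ≤ (i : ℕ) ∧ addrIdx k p = (i : ℕ) - k then (1 : ℝ) else 0) = 0 := by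
      intro p
      rw [if_neg (fun h => hk h.1)]
    rw [Finset.sum_congr rfl (fun p _ => this p), Finset.sum_const, smul_zero, zero_div]

lemma meanF_ADDR (k : ℕ) : meanF (ADDR k) = 1 / 2 := by
  unfold meanF
  have h := sum_b2r_half (univ : Finset (Fin (k + 2 ^ k) → Bool)) (ADDR k) (flipA k)
    (fun x _ => Finset.mem_univ _) (fun x _ => flipA_flipA k x) (fun x _ => ADDR_flipA k x)
  rw [h, card_univ]
  have hc : Fintype.card (Fin (k + 2 ^ k) → Bool) = 2 ^ (k + 2 ^ k) := by
    simp [Fintype.card_fun]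
  rw [hc]
  push_cast
  rw [div_div, div_eq_div_iff (by positivity) (by norm_num)]
  ring

/-- Every coordinate of the address function has online influence `≤ 2/ℓ`, and
the address function is balanced. -/
theorem addr_oI_small_and_balanced (k : ℕ) :
    (∀ i : Fin (k + 2 ^ k), oI (ADDR k) i ≤ 2 / (k + 2 ^ k : ℝ)) ∧ meanF (ADDR k) = 1 / 2 := by
  constructor
  · intro i
    rw [oI_ADDR]
    have hl : (0 : ℝ) < (k : ℝ) + 2 ^ k := by positivity
    by_cases hk : k ≤ (i : ℕ)
    · rw [if_pos hk, div_le_div_iff₀ (by positivity) hl]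
      have hk2 : (k : ℝ) ≤ 2 ^ k := by
        have := (Nat.lt_two_pow_self (n := k)).le
        exact_mod_cast this
      nlinarith
    · rw [if_neg hk]
      positivity
  · exact meanF_ADDR k
end

section
/- For any Boolean function f: {0,1}^ℓ → {0,1} and any set B ⊆ [ℓ] of coordinates, the online influence of the coalition B is at most the sum of the individual online influences taken over worst-case restrictions; in particular, for a singleton B = {i}, oI_B(f) = oI_i[f]/2. -/
open Finset

/-- The string produced when an online adversary controlling the coordinates in `B`
plays against the uniform seed `r`: coordinates outside `B` take their value from `r`,
and each coordinate in `B` is set by the strategy `σ` as a function of the coordinates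
with smaller index (the strategy only sees coordinates of smaller index; the others are
masked with the default value `d`). -/
def play {n : ℕ} {α : Type*} (B : Finset (Fin n)) (σ : Fin n → (Fin n → α) → α)
    (d : α) (r : Fin n → α) (i : Fin n) : α :=
  if i ∈ B then σ i (fun j => if h : (j : ℕ) < (i : ℕ) then play B σ d r j else d) else r i
termination_by (i : ℕ)
decreasing_by exact h

/-- Expected value of `f` on the source produced by the online adversary `(B, σ)`. -/
noncomputable def meanPlay {ℓ : ℕ} (f : (Fin ℓ → Bool) → Bool)
    (B : Finset (Fin ℓ)) (σ : Fin ℓ → (Fin ℓ → Bool) → Bool) : ℝ :=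
  (∑ r : Fin ℓ → Bool, b2r (f (play B σ false r))) / 2 ^ ℓ

/-- Worst-case-prefix online influence of coordinate `i`. -/
noncomputable def maxOI {ℓ : ℕ} (f : (Fin ℓ → Bool) → Bool) (i : Fin ℓ) : ℝ :=
  ⨆ p : Fin ℓ → Bool, |condExp f i p true - condExp f i p false|

/-! ### Auxiliary lemmas -/

section Aux

variable {ℓ : ℕ}

lemma play_not_mem {n : ℕ} {α : Type*} (B : Finset (Fin n)) (σ : Fin n → (Fin n → α) → α)
    (d : α) (r : Fin n → α) {i : Fin n} (h : i ∉ B) : play B σ d r i = r i := by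
  rw [play]; simp [h]

lemma play_loc {n : ℕ} {α : Type*} {B₁ B₂ : Finset (Fin n)} {σ : Fin n → (Fin n → α) → α}
    {d : α} {r₁ r₂ : Fin n → α} (i : Fin n)
    (hB : ∀ j : Fin n, (j : ℕ) ≤ (i : ℕ) → (j ∈ B₁ ↔ j ∈ B₂))
    (hr : ∀ j : Fin n, (j : ℕ) ≤ (i : ℕ) → r₁ j = r₂ j) :
    play B₁ σ d r₁ i = play B₂ σ d r₂ i := by
  induction' hn : (i : ℕ) using Nat.strong_induction_on with m ih generalizing i
  subst hn
  rw [play, play]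
  by_cases h : i ∈ B₁
  · rw [if_pos h, if_pos ((hB i le_rfl).1 h)]
    congr 1
    funext j
    by_cases hj : (j : ℕ) < (i : ℕ)
    · rw [dif_pos hj, dif_pos hj]
      exact ih (j : ℕ) hj j (fun j' hj' => hB j' (le_trans hj' (le_of_lt hj)))
        (fun j' hj' => hr j' (le_trans hj' (le_of_lt hj))) rfl
    · rw [dif_neg hj, dif_neg hj]
  · rw [if_neg h, if_neg (fun hz => h ((hB i le_rfl).2 hz)), hr i le_rfl]

lemma card_match (i : Fin ℓ) (q : Fin ℓ → Bool) :
    (univ.filter fun p : Fin ℓ → Bool => ∀ j, j < i → q j = p j).card = 2 ^ (ℓ - (i : ℕ)) := by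
  have h2 : ((univ : Finset ({j : Fin ℓ // ¬ j < i} → Bool)).card) = 2 ^ (ℓ - (i : ℕ)) := by
    rw [Finset.card_univ, Fintype.card_fun, Fintype.card_bool, Fintype.card_subtype]
    congr 1
    have : (univ.filter fun j : Fin ℓ => ¬ j < i) = Finset.Ici i := by
      ext j; simp [not_lt]
    rw [this, Fin.card_Ici]
  rw [← h2]
  apply Finset.card_nbij' (i := fun p (j : {j : Fin ℓ // ¬ j < i}) => p j.1)
    (j := fun y (j : Fin ℓ) => if h : j < i then q j else y ⟨j, h⟩)
  · intro a _; simp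
  · intro y _
    simp only [Finset.mem_coe, mem_filter, mem_univ, true_and]
    intro j hj; rw [dif_pos hj]
  · intro p hp
    simp only [Finset.mem_coe, mem_filter, mem_univ, true_and] at hp
    beta_reduce
    funext j
    by_cases hj : j < i
    · rw [dif_pos hj]; exact (hp j hj)
    · rw [dif_neg hj]
  · intro y _
    funext j
    simp only [dif_neg j.2]

def flipE (i : Fin ℓ) : (Fin ℓ → Bool) ≃ (Fin ℓ → Bool) where
  toFun r := Function.update r i (!(r i))
  invFun r := Function.update r i (!(r i))
  left_inv r := by
    funext j
    by_cases hj : j = i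
    · subst hj; simp
    · simp [Function.update_of_ne hj]
  right_inv r := by
    funext j
    by_cases hj : j = i
    · subst hj; simp
    · simp [Function.update_of_ne hj]

lemma sum_update (i : Fin ℓ) (b : Bool) (H : (Fin ℓ → Bool) → ℝ) :
    ∑ r : Fin ℓ → Bool, H (Function.update r i b)
      = 2 * ∑ r : Fin ℓ → Bool, if r i = b then H r else 0 := by
  have key : ∑ r : Fin ℓ → Bool, (if r i = b then H r else 0)
      = ∑ r : Fin ℓ → Bool, (if r i = b then 0 else H (Function.update r i b)) := by
    apply Fintype.sum_equiv (flipE i)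
    intro x
    by_cases hx : x i = b
    · have h1 : (flipE i x) i = !b := by simp [flipE, hx]
      have h2 : Function.update (flipE i x) i b = x := by
        funext j
        by_cases hj : j = i
        · subst hj; simp [hx]
        · simp [flipE, Function.update_of_ne hj]
      simp [hx, h1, h2, Bool.not_eq_self]
    · have h1 : (flipE i x) i = !(x i) := by simp [flipE]
      have hx' : (!(x i)) = b := by
        cases b <;> cases hxx : x i <;> simp_all
      simp [hx, h1, hx']
  have split : ∀ r : Fin ℓ → Bool, H (Function.update r i b)
      = (if r i = b then H r else 0) + (if r i = b then 0 else H (Function.update r i b)) := by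
    intro r
    by_cases hr : r i = b
    · rw [if_pos hr, if_pos hr, add_zero, ← hr, Function.update_eq_self]
    · rw [if_neg hr, if_neg hr, zero_add]
  rw [Finset.sum_congr rfl (fun r _ => split r), Finset.sum_add_distrib, ← key, two_mul]

lemma sum_group (i : Fin ℓ) (T : (Fin ℓ → Bool) → ℝ) :
    ∑ p : Fin ℓ → Bool, ∑ r : Fin ℓ → Bool, (if (∀ j, j < i → r j = p j) then T r else 0)
      = 2 ^ (ℓ - (i : ℕ)) * ∑ r : Fin ℓ → Bool, T r := by
  rw [Finset.sum_comm, Finset.mul_sum]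
  apply Finset.sum_congr rfl
  intro r _
  rw [← Finset.sum_filter, Finset.sum_const, card_match i r, nsmul_eq_mul]
  push_cast
  ring

lemma core (F : (Fin ℓ → Bool) → Bool) (i : Fin ℓ) (g : (Fin ℓ → Bool) → Bool)
    (hg : ∀ r r' : Fin ℓ → Bool, (∀ j, j < i → r j = r' j) → g r = g r') :
    ∑ r : Fin ℓ → Bool, (b2r (F (Function.update r i (g r))) - b2r (F r))
      = (∑ p : Fin ℓ → Bool, (if g p then (1:ℝ) else -1) *
          (condExp F i p true - condExp F i p false)) / 2 := by
  set uc : (Fin ℓ → Bool) → Bool → ℝ := fun p b =>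
    ∑ x : Fin ℓ → Bool, if (∀ j, j < i → x j = p j) ∧ x i = b then b2r (F x) else 0 with huc_def
  have hpow : (0:ℝ) < 2 ^ (ℓ - (i : ℕ) - 1) := by positivity
  have huc : ∀ (p : Fin ℓ → Bool) (b : Bool),
      uc p b = condExp F i p b * 2 ^ (ℓ - (i : ℕ) - 1) := by
    intro p b
    rw [condExp, div_mul_cancel₀ _ (ne_of_gt hpow)]
  have key : ∀ p : Fin ℓ → Bool,
      ∑ r : Fin ℓ → Bool, (if (∀ j, j < i → r j = p j)
          then (b2r (F (Function.update r i (g r))) - b2r (F r)) else 0)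
        = (if g p then (1:ℝ) else -1) * (uc p true - uc p false) := by
    intro p
    have hsub : ∀ r : Fin ℓ → Bool, (if (∀ j, j < i → r j = p j)
          then (b2r (F (Function.update r i (g r))) - b2r (F r)) else 0)
        = (if (∀ j, j < i → r j = p j) then b2r (F (Function.update r i (g r))) else 0)
          - (if (∀ j, j < i → r j = p j) then b2r (F r) else 0) := by
      intro r
      by_cases hr : (∀ j, j < i → r j = p j)
      · rw [if_pos hr, if_pos hr, if_pos hr]
      · rw [if_neg hr, if_neg hr, if_neg hr, sub_zero]
    rw [Finset.sum_congr rfl (fun r _ => hsub r), Finset.sum_sub_distrib]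
    have h1 : ∑ r : Fin ℓ → Bool,
        (if (∀ j, j < i → r j = p j) then b2r (F (Function.update r i (g r))) else 0)
        = 2 * uc p (g p) := by
      have step : ∀ r : Fin ℓ → Bool,
          (if (∀ j, j < i → r j = p j) then b2r (F (Function.update r i (g r))) else 0)
          = (fun x => if (∀ j, j < i → x j = p j) then b2r (F x) else 0)
              (Function.update r i (g p)) := by
        intro r
        have hmm : (∀ j, j < i → Function.update r i (g p) j = p j) ↔ (∀ j, j < i → r j = p j) := by
          constructor <;> intro h j hj <;>
            [ (have := h j hj; rwa [Function.update_of_ne (ne_of_lt hj)] at this);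
              (rw [Function.update_of_ne (ne_of_lt hj)]; exact h j hj) ]
        show _ = (if (∀ j, j < i → Function.update r i (g p) j = p j)
            then b2r (F (Function.update r i (g p))) else 0)
        by_cases hr : (∀ j, j < i → r j = p j)
        · have hgr : g r = g p := hg r p hr
          rw [if_pos hr, hgr, if_pos (hmm.mpr hr)]
        · rw [if_neg hr, if_neg (fun h => hr (hmm.mp h))]
      rw [Finset.sum_congr rfl (fun r _ => step r),
        sum_update i (g p) (fun x => if (∀ j, j < i → x j = p j) then b2r (F x) else 0)]
      congr 1
      apply Finset.sum_congr rfl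
      intro r _
      by_cases h1 : r i = g p <;> by_cases h2 : (∀ j, j < i → r j = p j) <;>
        simp [h1, h2, huc_def]
    have h2 : ∑ r : Fin ℓ → Bool, (if (∀ j, j < i → r j = p j) then b2r (F r) else 0)
        = uc p true + uc p false := by
      rw [huc_def, ← Finset.sum_add_distrib]
      apply Finset.sum_congr rfl
      intro r _
      by_cases hm : (∀ j, j < i → r j = p j) <;> cases hri : r i <;> simp [hm, hri]
    rw [h1, h2]
    cases hgp : g p <;> simp [hgp] <;> ring
  have main := sum_group i (fun r => b2r (F (Function.update r i (g r))) - b2r (F r))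
  rw [Finset.sum_congr rfl (fun p _ => key p)] at main
  have hpow2 : (2:ℝ) ^ (ℓ - (i : ℕ)) = 2 ^ (ℓ - (i : ℕ) - 1) * 2 := by
    rw [← pow_succ]
    congr 1
    have : i.1 < ℓ := i.2
    omega
  have expand : ∑ p : Fin ℓ → Bool, (if g p then (1:ℝ) else -1) * (uc p true - uc p false)
      = (∑ p : Fin ℓ → Bool, (if g p then (1:ℝ) else -1) *
          (condExp F i p true - condExp F i p false)) * 2 ^ (ℓ - (i : ℕ) - 1) := by
    rw [Finset.sum_mul]
    apply Finset.sum_congr rfl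
    intro p _
    rw [huc p true, huc p false]
    ring
  rw [expand, hpow2] at main
  have heq : ∑ p : Fin ℓ → Bool, (if g p then (1:ℝ) else -1) *
      (condExp F i p true - condExp F i p false)
      = 2 * ∑ r : Fin ℓ → Bool, (b2r (F (Function.update r i (g r))) - b2r (F r)) := by
    apply mul_right_cancel₀ (ne_of_gt hpow)
    linear_combination main
  rw [heq]
  ring

lemma condExp_congr (f : (Fin ℓ → Bool) → Bool) (i : Fin ℓ) {p p' : Fin ℓ → Bool} (b : Bool)
    (h : ∀ j, j < i → p j = p' j) : condExp f i p b = condExp f i p' b := by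
  unfold condExp
  congr 1
  apply Finset.sum_congr rfl
  intro x _
  refine if_congr (and_congr_left' ?_) rfl rfl
  constructor <;> intro hx j hj
  · rw [← h j hj]; exact hx j hj
  · rw [h j hj]; exact hx j hj

lemma play_singleton (i : Fin ℓ) (σ : Fin ℓ → (Fin ℓ → Bool) → Bool) (r : Fin ℓ → Bool) :
    play {i} σ false r = Function.update r i
      (σ i (fun j => if (j : ℕ) < (i : ℕ) then r j else false)) := by
  funext j
  by_cases hj : j = i
  · subst hj
    rw [play, if_pos (Finset.mem_singleton_self _), Function.update_self]
    congr 1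
    funext j'
    by_cases hj' : (j' : ℕ) < (j : ℕ)
    · rw [dif_pos hj', if_pos hj', play_not_mem]
      simp only [Finset.mem_singleton]
      exact fun h => absurd (congrArg (Fin.val) h) (Nat.ne_of_lt hj')
    · rw [dif_neg hj', if_neg hj']
  · rw [Function.update_of_ne hj, play_not_mem]
    simp [hj]

lemma singleton_diff (f : (Fin ℓ → Bool) → Bool) (i : Fin ℓ)
    (σ : Fin ℓ → (Fin ℓ → Bool) → Bool) :
    meanPlay f {i} σ - meanF f
      = (∑ p : Fin ℓ → Bool,
          (if σ i (fun j => if (j : ℕ) < (i : ℕ) then p j else false) then (1:ℝ) else -1) *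
          (condExp f i p true - condExp f i p false)) / 2 / 2 ^ ℓ := by
  have hg : ∀ r r' : Fin ℓ → Bool, (∀ j, j < i → r j = r' j) →
      (σ i (fun j => if (j : ℕ) < (i : ℕ) then r j else false)
        = σ i (fun j => if (j : ℕ) < (i : ℕ) then r' j else false)) := by
    intro r r' h
    congr 1
    funext j
    by_cases hj : (j : ℕ) < (i : ℕ)
    · rw [if_pos hj, if_pos hj, h j (Fin.lt_def.mpr hj)]
    · rw [if_neg hj, if_neg hj]
  have hcore := core f i (fun r => σ i (fun j => if (j : ℕ) < (i : ℕ) then r j else false)) hg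
  rw [meanPlay, meanF, div_sub_div_same, ← Finset.sum_sub_distrib]
  rw [Finset.sum_congr rfl (fun r _ => by rw [play_singleton i σ r]), hcore]

def hyb (B : Finset (Fin ℓ)) (σ : Fin ℓ → (Fin ℓ → Bool) → Bool) (m : ℕ)
    (r : Fin ℓ → Bool) : Fin ℓ → Bool :=
  play (B.filter fun j => (j : ℕ) < m) σ false r

variable {B : Finset (Fin ℓ)} {σ : Fin ℓ → (Fin ℓ → Bool) → Bool}

lemma hyb_zero (r : Fin ℓ → Bool) : hyb B σ 0 r = r := by
  funext j
  exact play_not_mem _ _ _ _ (by simp)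

lemma hyb_top (r : Fin ℓ → Bool) : hyb B σ ℓ r = play B σ false r := by
  unfold hyb
  rw [Finset.filter_true_of_mem (fun j _ => j.2)]

lemma hyb_ge {m : ℕ} {j : Fin ℓ} (h : m ≤ (j : ℕ)) (r : Fin ℓ → Bool) :
    hyb B σ m r j = r j :=
  play_not_mem _ _ _ _ (by simp [Nat.not_lt.mpr h])

lemma hyb_congr {m : ℕ} {j : Fin ℓ} (hj : (j : ℕ) < m) {r r' : Fin ℓ → Bool}
    (h : ∀ j' : Fin ℓ, (j' : ℕ) < m → r j' = r' j') : hyb B σ m r j = hyb B σ m r' j :=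
  play_loc j (fun _ _ => Iff.rfl) (fun j' hj' => h j' (lt_of_le_of_lt hj' hj))

lemma hyb_lt {k : ℕ} {j : Fin ℓ} (hj : (j : ℕ) < k) (r : Fin ℓ → Bool) :
    hyb B σ (k + 1) r j = hyb B σ k r j := by
  apply play_loc j
  · intro j' hj'
    simp only [Finset.mem_filter]
    have : (j' : ℕ) < k := lt_of_le_of_lt hj' hj
    constructor <;> rintro ⟨h1, _⟩ <;> exact ⟨h1, by omega⟩
  · intro _ _; rfl

lemma hyb_step {k : ℕ} (hk : k < ℓ) (hkB : (⟨k, hk⟩ : Fin ℓ) ∈ B) (r : Fin ℓ → Bool) :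
    hyb B σ (k + 1) r = hyb B σ k (Function.update r ⟨k, hk⟩
      (σ ⟨k, hk⟩ (fun j => if (j : ℕ) < k then hyb B σ k r j else false))) := by
  set kk : Fin ℓ := ⟨k, hk⟩ with hkk
  set gv : Bool := σ kk (fun j => if (j : ℕ) < k then hyb B σ k r j else false) with hgv
  set s : Fin ℓ → Bool := Function.update r kk gv with hs
  have hsr : ∀ j' : Fin ℓ, (j' : ℕ) < k → s j' = r j' := by
    intro j' hj'
    apply Function.update_of_ne
    intro hc
    rw [hc] at hj'
    exact absurd hj' (lt_irrefl _)
  funext j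
  rcases Nat.lt_trichotomy (j : ℕ) k with h | h | h
  · rw [hyb_lt h]
    exact (hyb_congr h hsr).symm
  · have hjv : (kk : ℕ) = k := rfl
    have hj : j = kk := Fin.ext (by rw [hjv]; exact h)
    rw [hj]
    have hmem : kk ∈ B.filter (fun j' : Fin ℓ => (j' : ℕ) < k + 1) :=
      Finset.mem_filter.mpr ⟨hkB, by omega⟩
    have hLHS : hyb B σ (k + 1) r kk = gv := by
      show play _ σ false r kk = gv
      rw [play, if_pos hmem, hgv]
      congr 1
      funext j'
      by_cases hj' : (j' : ℕ) < (kk : ℕ)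
      · rw [dif_pos hj']
        have hj'k : (j' : ℕ) < k := by omega
        rw [if_pos hj'k]
        exact hyb_lt hj'k r
      · rw [dif_neg hj']
        have : ¬ (j' : ℕ) < k := by omega
        rw [if_neg this]
    rw [hLHS, hyb_ge (le_of_eq hjv.symm), hs, Function.update_self]
  · rw [hyb_ge (by omega : k + 1 ≤ (j : ℕ)), hyb_ge (by omega : k ≤ (j : ℕ))]
    rw [hs, Function.update_of_ne]
    intro hc
    rw [hc] at h
    exact absurd h (lt_irrefl _)

lemma condExp_hyb (f : (Fin ℓ → Bool) → Bool) (k : ℕ) (hk : k < ℓ)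
    (p : Fin ℓ → Bool) (b : Bool) :
    condExp (fun x => f (hyb B σ k x)) ⟨k, hk⟩ p b
      = condExp f ⟨k, hk⟩ (hyb B σ k p) b := by
  unfold condExp
  congr 1
  rw [← Finset.sum_filter, ← Finset.sum_filter]
  apply Finset.sum_nbij' (i := fun x => hyb B σ k x)
    (j := fun y => fun j : Fin ℓ => if (j : ℕ) < k then p j else y j)
  · intro x hx
    simp only [Finset.mem_filter, Finset.mem_univ, true_and] at hx ⊢
    obtain ⟨hx1, hx2⟩ := hx
    refine ⟨fun j hj => ?_, ?_⟩
    · exact hyb_congr (Fin.lt_def.mp hj) (fun j' hj' => hx1 j' (Fin.lt_def.mpr hj'))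
    · have hx3 : hyb B σ k x ⟨k, hk⟩ = x ⟨k, hk⟩ := hyb_ge (by simp) x
      rw [hx3]; exact hx2
  · intro y hy
    simp only [Finset.mem_filter, Finset.mem_univ, true_and] at hy ⊢
    refine ⟨fun j hj => ?_, ?_⟩
    · rw [if_pos (Fin.lt_def.mp hj)]
    · rw [if_neg (by simp : ¬ ((⟨k, hk⟩ : Fin ℓ) : ℕ) < k)]
      exact hy.2
  · intro x hx
    simp only [Finset.mem_filter, Finset.mem_univ, true_and] at hx
    funext j
    by_cases hj : (j : ℕ) < k
    · rw [if_pos hj]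
      exact (hx.1 j (Fin.lt_def.mpr hj)).symm
    · rw [if_neg hj, hyb_ge (Nat.not_lt.mp hj)]
  · intro y hy
    simp only [Finset.mem_filter, Finset.mem_univ, true_and] at hy
    funext j
    by_cases hj : (j : ℕ) < k
    · rw [hyb_congr hj (r' := p) (fun j' hj' => by rw [if_pos hj'])]
      exact (hy.1 j (Fin.lt_def.mpr hj)).symm
    · have : hyb B σ k (fun j : Fin ℓ => if (j : ℕ) < k then p j else y j) j
          = (if (j : ℕ) < k then p j else y j) := hyb_ge (Nat.not_lt.mp hj) _
      rw [this, if_neg hj]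
  · intro x _
    rfl

end Aux


/-- The online influence of a coalition `B` is at most the sum over `B` of the individual
online influences taken over worst-case restrictions (prefixes); and for a singleton
coalition `{i}` the online influence of the coalition is exactly `oI_i[f]/2`. -/
theorem coalition_oI {ℓ : ℕ} (f : (Fin ℓ → Bool) → Bool) :
    (∀ (B : Finset (Fin ℓ)) (σ : Fin ℓ → (Fin ℓ → Bool) → Bool),
      |meanPlay f B σ - meanF f| ≤ ∑ i ∈ B, maxOI f i / 2) ∧
    (∀ i : Fin ℓ, IsGreatest
      {a : ℝ | ∃ σ : Fin ℓ → (Fin ℓ → Bool) → Bool, a = |meanPlay f {i} σ - meanF f|}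
      (oI f i / 2)) := by
  have hpowpos : (0:ℝ) < 2 ^ ℓ := by positivity
  constructor
  · intro B σ
    classical
    set S : ℕ → ℝ := fun m => ∑ r : Fin ℓ → Bool, b2r (f (hyb B σ m r)) with hS
    set T : ℕ → ℝ := fun k =>
      if h : k < ℓ then (if (⟨k, h⟩ : Fin ℓ) ∈ B then maxOI f ⟨k, h⟩ / 2 else 0) else 0 with hT
    have hstep : ∀ k ∈ Finset.range ℓ, |S (k + 1) - S k| ≤ 2 ^ ℓ * T k := by
      intro k hkr
      have hk : k < ℓ := Finset.mem_range.mp hkr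
      have hTk : T k = if (⟨k, hk⟩ : Fin ℓ) ∈ B then maxOI f ⟨k, hk⟩ / 2 else 0 := by
        simp only [hT]
        rw [dif_pos hk]
      rw [hTk]
      by_cases hkB : (⟨k, hk⟩ : Fin ℓ) ∈ B
      · rw [if_pos hkB]
        set g : (Fin ℓ → Bool) → Bool :=
          fun r => σ ⟨k, hk⟩ (fun j => if (j : ℕ) < k then hyb B σ k r j else false) with hgdef
        have hg : ∀ r r' : Fin ℓ → Bool,
            (∀ j, j < (⟨k, hk⟩ : Fin ℓ) → r j = r' j) → g r = g r' := by
          intro r r' h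
          simp only [hgdef]
          congr 1
          funext j
          by_cases hj : (j : ℕ) < k
          · rw [if_pos hj, if_pos hj,
              hyb_congr hj (fun j' hj' => h j' (Fin.lt_def.mpr hj'))]
          · rw [if_neg hj, if_neg hj]
        have hdiff : S (k + 1) - S k
            = ∑ r : Fin ℓ → Bool,
                (b2r ((fun x => f (hyb B σ k x)) (Function.update r ⟨k, hk⟩ (g r)))
                  - b2r ((fun x => f (hyb B σ k x)) r)) := by
          simp only [hS]
          rw [← Finset.sum_sub_distrib]
          apply Finset.sum_congr rfl
          intro r _
          rw [hyb_step hk hkB r]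
        rw [hdiff, core (fun x => f (hyb B σ k x)) ⟨k, hk⟩ g hg]
        have hΔ : ∀ p : Fin ℓ → Bool,
            |condExp (fun x => f (hyb B σ k x)) ⟨k, hk⟩ p true
              - condExp (fun x => f (hyb B σ k x)) ⟨k, hk⟩ p false| ≤ maxOI f ⟨k, hk⟩ := by
          intro p
          rw [condExp_hyb f k hk p true, condExp_hyb f k hk p false]
          have hbdd : BddAbove (Set.range (fun p : Fin ℓ → Bool =>
              |condExp f ⟨k, hk⟩ p true - condExp f ⟨k, hk⟩ p false|)) :=
            Set.Finite.bddAbove (Set.finite_range _)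
          exact le_ciSup hbdd (hyb B σ k p)
        have h1 : |∑ p : Fin ℓ → Bool, (if g p then (1:ℝ) else -1) *
            (condExp (fun x => f (hyb B σ k x)) ⟨k, hk⟩ p true
              - condExp (fun x => f (hyb B σ k x)) ⟨k, hk⟩ p false)|
            ≤ 2 ^ ℓ * maxOI f ⟨k, hk⟩ := by
          refine (Finset.abs_sum_le_sum_abs _ _).trans ?_
          have hle : ∀ p : Fin ℓ → Bool, |(if g p then (1:ℝ) else -1) *
              (condExp (fun x => f (hyb B σ k x)) ⟨k, hk⟩ p true
                - condExp (fun x => f (hyb B σ k x)) ⟨k, hk⟩ p false)|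
              ≤ maxOI f ⟨k, hk⟩ := by
            intro p
            rw [abs_mul]
            have he : |(if g p then (1:ℝ) else -1)| = 1 := by
              cases hgp : g p <;> simp [hgp]
            rw [he, one_mul]
            exact hΔ p
          refine (Finset.sum_le_sum (fun p _ => hle p)).trans (le_of_eq ?_)
          rw [Finset.sum_const, Finset.card_univ, nsmul_eq_mul]
          have hcard : Fintype.card (Fin ℓ → Bool) = 2 ^ ℓ := by
            rw [Fintype.card_fun, Fintype.card_bool, Fintype.card_fin]
          rw [hcard]
          push_cast
          ring
        rw [abs_div, abs_two]
        linarith [h1]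
      · rw [if_neg hkB, mul_zero]
        have hfil : (B.filter fun j : Fin ℓ => (j : ℕ) < k + 1)
            = (B.filter fun j : Fin ℓ => (j : ℕ) < k) := by
          ext j
          simp only [Finset.mem_filter, and_congr_right_iff]
          intro hjB
          have hne : (j : ℕ) ≠ k := by
            intro hc
            exact hkB (by rwa [show (⟨k, hk⟩ : Fin ℓ) = j from Fin.ext hc.symm])
          omega
        have hSeq : S (k + 1) = S k := by
          simp only [hS]
          apply Finset.sum_congr rfl
          intro r _
          have : hyb B σ (k + 1) r = hyb B σ k r := by
            unfold hyb
            rw [hfil]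
          rw [this]
        rw [hSeq, sub_self, abs_zero]
    have hsum : meanPlay f B σ - meanF f
        = (∑ k ∈ Finset.range ℓ, (S (k + 1) - S k)) / 2 ^ ℓ := by
      rw [Finset.sum_range_sub S ℓ, meanPlay, meanF, div_sub_div_same]
      congr 1
      simp only [hS]
      congr 1
      · apply Finset.sum_congr rfl
        intro r _
        rw [hyb_top]
      · apply Finset.sum_congr rfl
        intro r _
        rw [hyb_zero]
    have hfinal : |meanPlay f B σ - meanF f| ≤ ∑ k ∈ Finset.range ℓ, T k := by
      rw [hsum, abs_div, abs_of_pos hpowpos]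
      calc |∑ k ∈ Finset.range ℓ, (S (k + 1) - S k)| / 2 ^ ℓ
          ≤ (∑ k ∈ Finset.range ℓ, |S (k + 1) - S k|) / 2 ^ ℓ := by
            gcongr
            exact Finset.abs_sum_le_sum_abs _ _
        _ ≤ (∑ k ∈ Finset.range ℓ, 2 ^ ℓ * T k) / 2 ^ ℓ := by
            gcongr with k hkmem
            exact hstep k hkmem
        _ = ∑ k ∈ Finset.range ℓ, T k := by
            rw [← Finset.mul_sum, mul_comm, mul_div_assoc, div_self (ne_of_gt hpowpos), mul_one]
    refine hfinal.trans (le_of_eq ?_)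
    rw [← Fin.sum_univ_eq_sum_range T ℓ]
    have hTv : ∀ i : Fin ℓ, T (i : ℕ) = if i ∈ B then maxOI f i / 2 else 0 := by
      intro i
      simp only [hT]
      rw [dif_pos i.2]
    rw [Finset.sum_congr rfl (fun i _ => hTv i), Finset.sum_ite_mem, Finset.univ_inter]
  · intro i
    have habs : ∀ σ : Fin ℓ → (Fin ℓ → Bool) → Bool,
        |meanPlay f {i} σ - meanF f| ≤ oI f i / 2 := by
      intro σ
      rw [singleton_diff f i σ, abs_div, abs_div, abs_two, abs_of_pos hpowpos]
      have hb : |∑ p : Fin ℓ → Bool,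
          (if σ i (fun j => if (j : ℕ) < (i : ℕ) then p j else false) then (1:ℝ) else -1) *
          (condExp f i p true - condExp f i p false)|
          ≤ ∑ p : Fin ℓ → Bool, |condExp f i p true - condExp f i p false| := by
        refine (Finset.abs_sum_le_sum_abs _ _).trans (le_of_eq ?_)
        apply Finset.sum_congr rfl
        intro p _
        rw [abs_mul]
        cases hgp : σ i (fun j => if (j : ℕ) < (i : ℕ) then p j else false) <;> simp [hgp]
      have hoI : oI f i / 2
          = (∑ p : Fin ℓ → Bool, |condExp f i p true - condExp f i p false|) / 2 / 2 ^ ℓ := by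
        rw [oI]; ring
      rw [hoI]
      gcongr
    constructor
    · refine ⟨fun _ q => decide (condExp f i q false ≤ condExp f i q true), ?_⟩
      rw [singleton_diff]
      have hpt : ∀ p : Fin ℓ → Bool,
          (if decide (condExp f i (fun j => if (j : ℕ) < (i : ℕ) then p j else false) false
              ≤ condExp f i (fun j => if (j : ℕ) < (i : ℕ) then p j else false) true)
            then (1:ℝ) else -1) * (condExp f i p true - condExp f i p false)
          = |condExp f i p true - condExp f i p false| := by
        intro p
        have hm : ∀ b : Bool, condExp f i (fun j => if (j : ℕ) < (i : ℕ) then p j else false) b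
            = condExp f i p b :=
          fun b => condExp_congr f i b (fun j hj => by rw [if_pos (Fin.lt_def.mp hj)])
        by_cases hc : condExp f i p false ≤ condExp f i p true
        · have hd : decide (condExp f i (fun j => if (j : ℕ) < (i : ℕ) then p j else false) false
              ≤ condExp f i (fun j => if (j : ℕ) < (i : ℕ) then p j else false) true) = true :=
            decide_eq_true (by rw [hm, hm]; exact hc)
          rw [hd, if_pos rfl, one_mul, abs_of_nonneg (sub_nonneg.mpr hc)]
        · have hd : decide (condExp f i (fun j => if (j : ℕ) < (i : ℕ) then p j else false) false
              ≤ condExp f i (fun j => if (j : ℕ) < (i : ℕ) then p j else false) true) = false :=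
            decide_eq_false (fun h => hc (by rwa [hm, hm] at h))
          rw [hd]
          rw [if_neg (by simp)]
          rw [abs_of_neg (sub_neg.mpr (lt_of_not_ge hc))]
          ring
      rw [Finset.sum_congr rfl (fun p _ => hpt p)]
      rw [abs_of_nonneg (by positivity), oI]
      ring
    · rintro a ⟨σ, rfl⟩
      exact habs σ
end

section
/- For every protocol in which ℓ players sequentially broadcast single bits (each bad player's bit an arbitrary function of all previously broadcast bits, good players' bits uniform and independent), and every Boolean output function f: {0,1}^ℓ → {0,1}, a coalition of b bad players can bias the outcome: there is a choice of b positions and an online strategy making |Pr[f(X) = 1] - Pr[f(U_ℓ) = 1]| ≥ b/(2ℓ) · min(Pr[f(U)=1], Pr[f(U)=0]) — in particular, for balanced f, some outcome occurs with probability at least 1/2 + b/(2ℓ). Consequently, there is no ε-extractor for uniform (g, ℓ, 1)-oNOSF sources with ε < (ℓ-g)/(2ℓ). -/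
open Finset

namespace BOL
variable {ℓ : ℕ}

/-- prefix mask: keep coordinates `< i`, zero out the rest. -/
def Mask (i : Fin ℓ) (y : Fin ℓ → Bool) : Fin ℓ → Bool :=
  fun j => if (j : ℕ) < (i : ℕ) then y j else false

noncomputable def Cnt (v : Bool) (F : (Fin ℓ → Bool) → Bool) : ℝ :=
  ∑ y : Fin ℓ → Bool, if F y = v then 1 else 0

noncomputable def gC (v : Bool) (F : (Fin ℓ → Bool) → Bool) (i : Fin ℓ)
    (p : Fin ℓ → Bool) (c : Bool) : ℝ :=
  ∑ y : Fin ℓ → Bool, if Mask i y = p ∧ y i = c ∧ F y = v then 1 else 0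

noncomputable def Jf (v : Bool) (F : (Fin ℓ → Bool) → Bool) (i : Fin ℓ) : ℝ :=
  ∑ p : Fin ℓ → Bool, |gC v F i p true - gC v F i p false|

noncomputable def γg (v : Bool) (F : (Fin ℓ → Bool) → Bool) (i : Fin ℓ)
    (p : Fin ℓ → Bool) : Bool :=
  if gC v F i p true < gC v F i p false then true else false

def flip (i : Fin ℓ) (r : Fin ℓ → Bool) : Fin ℓ → Bool := Function.update r i (!(r i))

lemma cnt_nonneg (v : Bool) (F : (Fin ℓ → Bool) → Bool) : 0 ≤ Cnt v F :=
  Finset.sum_nonneg fun y _ => by positivity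

lemma gC_nonneg (v F) (i : Fin ℓ) (p c) : 0 ≤ gC v F i p c :=
  Finset.sum_nonneg fun y _ => by positivity

lemma sum_mask_partition (i : Fin ℓ) (h : (Fin ℓ → Bool) → ℝ) :
    ∑ y : Fin ℓ → Bool, h y
      = ∑ p : Fin ℓ → Bool, ∑ y : Fin ℓ → Bool, if Mask i y = p then h y else 0 := by
  rw [Finset.sum_comm]
  refine Finset.sum_congr rfl fun y _ => ?_
  rw [Finset.sum_ite_eq univ (Mask i y) (fun _ => h y), if_pos (mem_univ _)]

lemma flip_invol (i : Fin ℓ) : Function.Involutive (flip i) := by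
  intro r; funext j
  rcases eq_or_ne j i with rfl | hne
  · simp [flip]
  · simp [flip, Function.update_of_ne hne]

lemma sum_flip (i : Fin ℓ) (h : (Fin ℓ → Bool) → ℝ) :
    ∑ r : Fin ℓ → Bool, h r = ∑ r : Fin ℓ → Bool, h (flip i r) :=
  (Equiv.sum_comp ((flip_invol i).toPerm _) h).symm

lemma sum_invol (w : (Fin ℓ → Bool) → (Fin ℓ → Bool)) (hw : Function.Involutive w)
    (h : (Fin ℓ → Bool) → ℝ) :
    ∑ r : Fin ℓ → Bool, h r = ∑ r : Fin ℓ → Bool, h (w r) :=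
  (Equiv.sum_comp (hw.toPerm _) h).symm

lemma mask_flip (i : Fin ℓ) (r : Fin ℓ → Bool) : Mask i (flip i r) = Mask i r := by
  funext j
  by_cases hj : (j : ℕ) < (i : ℕ)
  · have hne : j ≠ i := fun e => by subst e; exact lt_irrefl _ hj
    simp [Mask, hj, flip, Function.update_of_ne hne]
  · simp [Mask, hj]

lemma mask_upd (i : Fin ℓ) (c : Bool) (r : Fin ℓ → Bool) :
    Mask i (Function.update r i c) = Mask i r := by
  funext j
  by_cases hj : (j : ℕ) < (i : ℕ)
  · have hne : j ≠ i := fun e => by subst e; exact lt_irrefl _ hj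
    simp [Mask, hj, Function.update_of_ne hne]
  · simp [Mask, hj]

lemma mask_idem (i : Fin ℓ) (r : Fin ℓ → Bool) : Mask i (Mask i r) = Mask i r := by
  funext j; by_cases hj : (j : ℕ) < (i : ℕ) <;> simp [Mask, hj]

lemma cnt_eq_sum_g (v F) (i : Fin ℓ) :
    Cnt v F = ∑ p : Fin ℓ → Bool, (gC v F i p true + gC v F i p false) := by
  rw [Cnt, sum_mask_partition i]
  refine Finset.sum_congr rfl fun p _ => ?_
  rw [gC, gC, ← Finset.sum_add_distrib]
  refine Finset.sum_congr rfl fun y _ => ?_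
  by_cases h1 : Mask i y = p <;> by_cases h2 : F y = v <;> cases hyi : y i <;>
    simp [h1, h2, hyi]

lemma sum_upd_eq_two_g (v : Bool) (F : (Fin ℓ → Bool) → Bool) (i : Fin ℓ)
    (p : Fin ℓ → Bool) (c : Bool) :
    ∑ r : Fin ℓ → Bool, (if Mask i r = p ∧ F (Function.update r i c) = v then (1:ℝ) else 0)
      = 2 * gC v F i p c := by
  have hsplit : ∑ r : Fin ℓ → Bool,
        (if Mask i r = p ∧ F (Function.update r i c) = v then (1:ℝ) else 0)
      = (∑ r : Fin ℓ → Bool,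
          (if Mask i r = p ∧ r i = c ∧ F (Function.update r i c) = v then (1:ℝ) else 0))
        + ∑ r : Fin ℓ → Bool,
          (if Mask i r = p ∧ r i = !c ∧ F (Function.update r i c) = v then (1:ℝ) else 0) := by
    rw [← Finset.sum_add_distrib]
    refine Finset.sum_congr rfl fun r _ => ?_
    by_cases h1 : Mask i r = p <;> by_cases h2 : F (Function.update r i c) = v <;>
      cases hri : r i <;> cases c <;> simp [h1, h2, hri]
  have hA : ∑ r : Fin ℓ → Bool,
        (if Mask i r = p ∧ r i = c ∧ F (Function.update r i c) = v then (1:ℝ) else 0)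
      = gC v F i p c := by
    refine Finset.sum_congr rfl fun r _ => ?_
    by_cases hr : r i = c
    · rw [← hr, Function.update_eq_self]
    · simp [hr]
  have hB : ∑ r : Fin ℓ → Bool,
        (if Mask i r = p ∧ r i = !c ∧ F (Function.update r i c) = v then (1:ℝ) else 0)
      = gC v F i p c := by
    rw [sum_flip i]
    refine Finset.sum_congr rfl fun r _ => ?_
    have h1 : Mask i (flip i r) = Mask i r := mask_flip i r
    have h2 : flip i r i = !(r i) := by simp [flip]
    have h3 : Function.update (flip i r) i c = Function.update r i c := by
      simp [flip, Function.update_idem]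
    rw [h1, h2, h3]
    by_cases hr : r i = c
    · rw [← hr, Function.update_eq_self]
      simp [hr]
    · have : ¬ (!(r i) = !c) := by cases hri : r i <;> cases c <;> simp_all
      simp [this, hr]
  rw [hsplit, hA, hB]; ring


lemma step_identity (v : Bool) (F : (Fin ℓ → Bool) → Bool) (i : Fin ℓ)
    (c' : (Fin ℓ → Bool) → Bool) (Hc : ∀ r, c' r = γg v F i (Mask i r)) :
    Cnt v (fun r => F (Function.update r i (c' r))) = Cnt v F - Jf v F i := by
  have hmain : Cnt v (fun r => F (Function.update r i (c' r)))
      = ∑ p : Fin ℓ → Bool, 2 * gC v F i p (γg v F i p) := by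
    rw [Cnt, sum_mask_partition i]
    refine Finset.sum_congr rfl fun p _ => ?_
    rw [← sum_upd_eq_two_g v F i p (γg v F i p)]
    refine Finset.sum_congr rfl fun r _ => ?_
    by_cases h1 : Mask i r = p
    · rw [Hc r, h1]; simp [h1]
    · simp [h1]
  rw [hmain, cnt_eq_sum_g v F i, Jf, ← Finset.sum_sub_distrib]
  refine Finset.sum_congr rfl fun p _ => ?_
  rcases lt_or_ge (gC v F i p true) (gC v F i p false) with h | h
  · rw [γg, if_pos h, abs_of_neg (by linarith : gC v F i p true - gC v F i p false < 0)]
    ring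
  · rw [γg, if_neg (not_lt.mpr h), abs_of_nonneg (by linarith)]
    ring

lemma g_eq_of_mem (v : Bool) (F : (Fin ℓ → Bool) → Bool) (B : Finset (Fin ℓ))
    (HB : ∀ r s : Fin ℓ → Bool, (∀ j, j ∉ B → r j = s j) → F r = F s)
    (i : Fin ℓ) (hi : i ∈ B) (p : Fin ℓ → Bool) :
    gC v F i p true = gC v F i p false := by
  rw [gC, sum_flip i]
  refine Finset.sum_congr rfl fun y _ => ?_
  have h1 : Mask i (flip i y) = Mask i y := mask_flip i y
  have h2 : flip i y i = !(y i) := by simp [flip]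
  have h3 : F (flip i y) = F y := by
    refine HB _ _ fun j hj => ?_
    have : j ≠ i := fun e => by subst e; exact hj hi
    simp [flip, Function.update_of_ne this]
  rw [h1, h2, h3]
  cases hyi : y i <;> simp [hyi, gC]

lemma J_eq_zero (v : Bool) (F : (Fin ℓ → Bool) → Bool) (B : Finset (Fin ℓ))
    (HB : ∀ r s : Fin ℓ → Bool, (∀ j, j ∉ B → r j = s j) → F r = F s)
    (i : Fin ℓ) (hi : i ∈ B) : Jf v F i = 0 := by
  rw [Jf]
  refine Finset.sum_eq_zero fun p _ => ?_
  rw [g_eq_of_mem v F B HB i hi p, sub_self, abs_zero]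

lemma gC_inv (v : Bool) (F : (Fin ℓ → Bool) → Bool) (B : Finset (Fin ℓ))
    (HB : ∀ r s : Fin ℓ → Bool, (∀ j, j ∉ B → r j = s j) → F r = F s)
    (i : Fin ℓ) (p p' : Fin ℓ → Bool)
    (hagree : ∀ j : Fin ℓ, ¬((j : ℕ) < (i : ℕ) ∧ j ∈ B) → p j = p' j)
    (hp : Mask i p = p) (hp' : Mask i p' = p') (c : Bool) :
    gC v F i p c = gC v F i p' c := by
  set w : (Fin ℓ → Bool) → (Fin ℓ → Bool) :=
    fun y j => if (j : ℕ) < (i : ℕ) ∧ j ∈ B then xor (y j) (xor (p j) (p' j)) else y j with hw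
  have hinvol : Function.Involutive w := by
    intro y; funext j
    by_cases h : (j : ℕ) < (i : ℕ) ∧ j ∈ B
    · simp only [hw, if_pos h]
      cases y j <;> cases p j <;> cases p' j <;> rfl
    · simp only [hw, if_neg h]
  have h2 : ∀ y, w y i = y i := by
    intro y; simp only [hw]; rw [if_neg]; rintro ⟨h, -⟩; exact lt_irrefl _ h
  have h3 : ∀ y, F (w y) = F y := by
    intro y
    refine HB _ _ fun j hj => ?_
    simp only [hw]; rw [if_neg]; rintro ⟨-, hB⟩; exact hj hB
  have h1 : ∀ y, (Mask i (w y) = p) ↔ (Mask i y = p') := by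
    intro y
    constructor
    · intro h; funext j
      by_cases hj : (j : ℕ) < (i : ℕ)
      · have hmj := congrFun h j
        simp only [Mask, if_pos hj] at hmj ⊢
        by_cases hjB : j ∈ B
        · simp only [hw, if_pos (show (j:ℕ) < (i:ℕ) ∧ j ∈ B from ⟨hj, hjB⟩)] at hmj
          revert hmj; cases y j <;> cases p j <;> cases p' j <;> decide
        · simp only [hw, if_neg (show ¬((j:ℕ) < (i:ℕ) ∧ j ∈ B) from fun hh => hjB hh.2)]
            at hmj
          rw [hmj, hagree j (fun hh => hjB hh.2)]
      · simp only [Mask, if_neg hj]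
        exact ((congrFun hp' j).symm.trans (if_neg hj)).symm
    · intro h; funext j
      by_cases hj : (j : ℕ) < (i : ℕ)
      · have hmj := congrFun h j
        simp only [Mask, if_pos hj] at hmj ⊢
        by_cases hjB : j ∈ B
        · simp only [hw, if_pos (show (j:ℕ) < (i:ℕ) ∧ j ∈ B from ⟨hj, hjB⟩)]
          revert hmj; cases y j <;> cases p j <;> cases p' j <;> decide
        · simp only [hw, if_neg (show ¬((j:ℕ) < (i:ℕ) ∧ j ∈ B) from fun hh => hjB hh.2)]
          rw [hmj, hagree j (fun hh => hjB hh.2)]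
      · simp only [Mask, if_neg hj]
        exact ((congrFun hp j).symm.trans (if_neg hj)).symm
  rw [gC, sum_invol w hinvol, gC]
  refine Finset.sum_congr rfl fun y _ => ?_
  rw [h2, h3]
  exact if_congr (and_congr (h1 y) Iff.rfl) rfl rfl

lemma γg_inv (v : Bool) (F : (Fin ℓ → Bool) → Bool) (B : Finset (Fin ℓ))
    (HB : ∀ r s : Fin ℓ → Bool, (∀ j, j ∉ B → r j = s j) → F r = F s)
    (i : Fin ℓ) (p p' : Fin ℓ → Bool)
    (hagree : ∀ j : Fin ℓ, ¬((j : ℕ) < (i : ℕ) ∧ j ∈ B) → p j = p' j)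
    (hp : Mask i p = p) (hp' : Mask i p' = p') :
    γg v F i p = γg v F i p' := by
  rw [γg, γg, gC_inv v F B HB i p p' hagree hp hp' true,
    gC_inv v F B HB i p p' hagree hp hp' false]

-- class card lemma
lemma classcard (i : Fin ℓ) (p : Fin ℓ → Bool) (hp : Mask i p = p) :
    ∑ x : Fin ℓ → Bool, (if Mask i x = p then (1:ℝ) else 0) = 2 ^ (ℓ - (i:ℕ)) := by
  classical
  rw [Finset.sum_boole]
  norm_cast
  rw [← Fintype.card_subtype]
  have e : {x : Fin ℓ → Bool // Mask i x = p} ≃ ({j : Fin ℓ // ¬ ((j:ℕ) < (i:ℕ))} → Bool) :=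
    { toFun := fun x j => x.1 j.1
      invFun := fun u =>
        ⟨fun j => if h : (j : ℕ) < (i:ℕ) then p j else u ⟨j, h⟩, by
          funext j
          by_cases h : (j : ℕ) < (i:ℕ)
          · simp [Mask, h]
          · simp only [Mask, if_neg h]
            exact ((congrFun hp j).symm.trans (if_neg h)).symm⟩
      left_inv := fun x => by
        apply Subtype.ext
        funext j
        by_cases h : (j : ℕ) < (i:ℕ)
        · simp only [dif_pos h]
          have := congrFun x.2 j
          simp only [Mask, if_pos h] at this
          exact this.symm
        · simp only [dif_neg h]
      right_inv := fun u => by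
        funext j
        simp only [dif_neg j.2] }
  rw [Fintype.card_congr e, Fintype.card_fun]
  have : Fintype.card {j : Fin ℓ // ¬ ((j:ℕ) < (i:ℕ))} = ℓ - (i:ℕ) := by
    have e2 : {j : Fin ℓ // ¬ ((j:ℕ) < (i:ℕ))} ≃ Fin (ℓ - (i:ℕ)) :=
      { toFun := fun j => ⟨(j.1 : ℕ) - (i:ℕ), by
          have h1 : (i:ℕ) ≤ (j.1:ℕ) := Nat.le_of_not_lt j.2
          have h2 : (j.1:ℕ) < ℓ := j.1.isLt
          omega⟩
        invFun := fun k => ⟨⟨(i:ℕ) + (k:ℕ), by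
          have := k.isLt
          have := i.isLt
          omega⟩, by simp⟩
        left_inv := fun j => by
          apply Subtype.ext; apply Fin.ext
          have h1 : (i:ℕ) ≤ (j.1:ℕ) := Nat.le_of_not_lt j.2
          simp; omega
        right_inv := fun k => by
          apply Fin.ext
          simp }
    rw [Fintype.card_congr e2, Fintype.card_fin]
  rw [this, Fintype.card_bool]

lemma mask_eq_iff (i : Fin ℓ) (y x : Fin ℓ → Bool) :
    Mask i y = Mask i x ↔ ∀ j : Fin ℓ, (j:ℕ) < (i:ℕ) → y j = x j := by
  constructor
  · intro h j hj
    have := congrFun h j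
    simpa [Mask, hj] using this
  · intro h; funext j
    by_cases hj : (j:ℕ) < (i:ℕ)
    · simp only [Mask, if_pos hj]; exact h j hj
    · simp only [Mask, if_neg hj]

lemma gC_unmasked (v : Bool) (F : (Fin ℓ → Bool) → Bool) (i : Fin ℓ)
    (p : Fin ℓ → Bool) (hp : Mask i p ≠ p) (c : Bool) : gC v F i p c = 0 := by
  rw [gC]
  refine Finset.sum_eq_zero fun y _ => ?_
  rw [if_neg]
  rintro ⟨h1, -, -⟩
  exact hp (by rw [← h1, mask_idem])

lemma cnt_le_sum_J (v : Bool) (F : (Fin ℓ → Bool) → Bool)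
    (hq : Cnt v F ≤ 2 ^ ℓ / 2) :
    Cnt v F ≤ ∑ i : Fin ℓ, Jf v F i := by
  classical
  set q : ℝ := Cnt v F / 2 ^ ℓ with hqdef
  set H : ℕ → (Fin ℓ → Bool) → ℝ := fun t x =>
    ∑ y : Fin ℓ → Bool, if (∀ j : Fin ℓ, (j:ℕ) < t → y j = x j) ∧ F y = v then 1 else 0
    with hH
  set M : ℕ → (Fin ℓ → Bool) → ℝ := fun t x => H t x / 2 ^ (ℓ - t) with hM
  have h2l : (0:ℝ) < 2 ^ ℓ := by positivity
  have hM0 : ∀ x, M 0 x = q := by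
    intro x
    simp only [hM, hH, hqdef, Cnt, Nat.sub_zero]
    congr 1
    refine Finset.sum_congr rfl fun y _ => ?_
    simp
  have hMl : ∀ x, M ℓ x = if F x = v then 1 else 0 := by
    intro x
    simp only [hM, hH, Nat.sub_self, pow_zero, div_one]
    have h1 : ∀ y : Fin ℓ → Bool,
        ((∀ j : Fin ℓ, (j:ℕ) < ℓ → y j = x j) ∧ F y = v) ↔ (y = x ∧ F y = v) :=
      fun y => and_congr_left'
        ⟨fun h => funext fun j => h j j.isLt, fun h j _ => congrFun h j⟩
    have e1 : (∑ y : Fin ℓ → Bool,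
          if (∀ j : Fin ℓ, (j:ℕ) < ℓ → y j = x j) ∧ F y = v then (1:ℝ) else 0)
        = ∑ y : Fin ℓ → Bool, if y = x then (if F y = v then (1:ℝ) else 0) else 0 := by
      refine Finset.sum_congr rfl fun y _ => ?_
      rw [if_congr (h1 y) rfl rfl]
      by_cases h2 : y = x <;> by_cases h3 : F y = v <;> simp [h2, h3]
    rw [e1, Finset.sum_ite_eq' univ x (fun y => if F y = v then (1:ℝ) else 0),
      if_pos (mem_univ _)]
  have hkey : ∀ (t : ℕ) (ht : t < ℓ),
      ∑ x : Fin ℓ → Bool, |M (t+1) x - M t x| = Jf v F ⟨t, ht⟩ := by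
    intro t ht
    set i : Fin ℓ := ⟨t, ht⟩ with hi
    have hHt : ∀ x, H t x = gC v F i (Mask i x) true + gC v F i (Mask i x) false := by
      intro x
      simp only [hH, gC, ← Finset.sum_add_distrib]
      refine Finset.sum_congr rfl fun y _ => ?_
      have hiff : (∀ j : Fin ℓ, (j:ℕ) < t → y j = x j) ↔ Mask i y = Mask i x :=
        (mask_eq_iff i y x).symm
      by_cases h1 : Mask i y = Mask i x <;> by_cases h2 : F y = v <;>
        cases hyi : y i <;> simp [h1, h2, hyi, hiff]
    have hHt1 : ∀ x, H (t+1) x = gC v F i (Mask i x) (x i) := by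
      intro x
      simp only [hH, gC]
      refine Finset.sum_congr rfl fun y _ => ?_
      refine if_congr ?_ rfl rfl
      constructor
      · rintro ⟨h, hF⟩
        exact ⟨(mask_eq_iff i y x).mpr fun j hj => h j (Nat.lt_succ_of_lt hj),
          h i (Nat.lt_succ_self t), hF⟩
      · rintro ⟨hm, hic, hF⟩
        refine ⟨fun j hj => ?_, hF⟩
        rcases Nat.lt_succ_iff_lt_or_eq.mp hj with h | h
        · exact (mask_eq_iff i y x).mp hm j h
        · rw [show j = i from Fin.ext h]; exact hic
    have hstep : ∀ x, |M (t+1) x - M t x|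
        = |gC v F i (Mask i x) true - gC v F i (Mask i x) false| / 2 ^ (ℓ - t) := by
      intro x
      have hpow : (2:ℝ) ^ (ℓ - t) = 2 * 2 ^ (ℓ - (t+1)) := by
        have h3 : ℓ - t = (ℓ - (t+1)) + 1 := by omega
        rw [h3, pow_succ]; ring
      have habs : ∀ a b c : ℝ, (c = a ∨ c = b) →
          |c / 2 ^ (ℓ - (t+1)) - (a + b) / (2 * 2 ^ (ℓ - (t+1)))|
            = |a - b| / (2 * 2 ^ (ℓ - (t+1))) := by
        intro a b c hc
        have h2D : (0:ℝ) < 2 * 2 ^ (ℓ - (t+1)) := by positivity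
        rcases hc with rfl | rfl
        · rw [show c / 2 ^ (ℓ - (t+1)) - (c + b) / (2 * 2 ^ (ℓ - (t+1)))
              = (c - b) / (2 * 2 ^ (ℓ - (t+1))) from by field_simp; ring]
          rw [abs_div, abs_of_pos h2D]
        · rw [show c / 2 ^ (ℓ - (t+1)) - (a + c) / (2 * 2 ^ (ℓ - (t+1)))
              = (c - a) / (2 * 2 ^ (ℓ - (t+1))) from by field_simp; ring]
          rw [abs_div, abs_of_pos h2D, abs_sub_comm]
      simp only [hM]
      rw [hHt x, hHt1 x, hpow]
      cases hxi : x i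
      · exact habs _ _ _ (Or.inr rfl)
      · exact habs _ _ _ (Or.inl rfl)
    calc ∑ x : Fin ℓ → Bool, |M (t+1) x - M t x|
        = ∑ x : Fin ℓ → Bool,
            |gC v F i (Mask i x) true - gC v F i (Mask i x) false| / 2 ^ (ℓ - t) :=
          Finset.sum_congr rfl fun x _ => hstep x
      _ = ∑ p : Fin ℓ → Bool, ∑ x : Fin ℓ → Bool,
            if Mask i x = p then
              |gC v F i (Mask i x) true - gC v F i (Mask i x) false| / 2 ^ (ℓ - t)
            else 0 := sum_mask_partition i _
      _ = Jf v F i := by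
          rw [Jf]
          refine Finset.sum_congr rfl fun p _ => ?_
          have hrw : ∀ x : Fin ℓ → Bool,
              (if Mask i x = p then
                |gC v F i (Mask i x) true - gC v F i (Mask i x) false| / 2 ^ (ℓ - t)
              else 0)
            = (|gC v F i p true - gC v F i p false| / 2 ^ (ℓ - t))
                * (if Mask i x = p then 1 else 0) := by
            intro x
            by_cases h : Mask i x = p
            · rw [h]; simp [h]
            · simp [h]
          rw [Finset.sum_congr rfl fun x _ => hrw x, ← Finset.mul_sum]
          by_cases hp : Mask i p = p
          · rw [classcard i p hp]
            have : ((i:ℕ) : ℕ) = t := rfl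
            rw [div_mul_cancel₀]
            positivity
          · have hz : ∀ x : Fin ℓ → Bool, Mask i x ≠ p :=
              fun x hx => hp (by rw [← hx, mask_idem])
            rw [Finset.sum_congr rfl fun x _ => if_neg (hz x)]
            rw [gC_unmasked v F i p hp true, gC_unmasked v F i p hp false]
            simp
  have tele : ∀ x, |M ℓ x - M 0 x| ≤ ∑ t ∈ Finset.range ℓ, |M (t+1) x - M t x| := by
    intro x
    have h := Finset.sum_range_sub (fun t => M t x) ℓ
    calc |M ℓ x - M 0 x| = |∑ t ∈ Finset.range ℓ, (M (t+1) x - M t x)| := by rw [h]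
      _ ≤ ∑ t ∈ Finset.range ℓ, |M (t+1) x - M t x| := Finset.abs_sum_le_sum_abs _ _
  have hsum : ∑ x : Fin ℓ → Bool, |M ℓ x - M 0 x| ≤ ∑ i : Fin ℓ, Jf v F i := by
    calc ∑ x : Fin ℓ → Bool, |M ℓ x - M 0 x|
        ≤ ∑ x : Fin ℓ → Bool, ∑ t ∈ Finset.range ℓ, |M (t+1) x - M t x| :=
          Finset.sum_le_sum fun x _ => tele x
      _ = ∑ t ∈ Finset.range ℓ, ∑ x : Fin ℓ → Bool, |M (t+1) x - M t x| :=
          Finset.sum_comm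
      _ = ∑ i : Fin ℓ, Jf v F i := by
          rw [← Fin.sum_univ_eq_sum_range
            (fun t => ∑ x : Fin ℓ → Bool, |M (t+1) x - M t x|) ℓ]
          exact Finset.sum_congr rfl fun i _ => hkey i.val i.isLt
  have hq1 : q ≤ 1/2 := by
    rw [hqdef, div_le_iff₀ h2l]
    calc Cnt v F ≤ 2 ^ ℓ / 2 := hq
      _ = 1/2 * 2 ^ ℓ := by ring
  have hq0 : 0 ≤ q := div_nonneg (cnt_nonneg v F) (le_of_lt h2l)
  have hcard : ∑ x : Fin ℓ → Bool, (1:ℝ) = 2 ^ ℓ := by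
    rw [Finset.sum_const, card_univ]
    have : Fintype.card (Fin ℓ → Bool) = 2 ^ ℓ := by
      rw [Fintype.card_fun, Fintype.card_bool, Fintype.card_fin]
    rw [this]; simp
  have hlow : Cnt v F ≤ ∑ x : Fin ℓ → Bool, |M ℓ x - M 0 x| := by
    have heval : ∀ x, |M ℓ x - M 0 x|
        = (if F x = v then (1:ℝ) else 0) + (q * 1 - q * (2*(if F x = v then (1:ℝ) else 0))) := by
      intro x
      rw [hMl x, hM0 x]
      by_cases h : F x = v
      · rw [if_pos h, abs_of_nonneg (by linarith)]; ring
      · rw [if_neg h, abs_of_nonpos (by linarith)]; ring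
    rw [Finset.sum_congr rfl fun x _ => heval x, Finset.sum_add_distrib,
      Finset.sum_sub_distrib, ← Finset.mul_sum, ← Finset.mul_sum, hcard, ← Cnt]
    have hc2 : ∑ x : Fin ℓ → Bool, 2 * (if F x = v then (1:ℝ) else 0) = 2 * Cnt v F := by
      rw [← Finset.mul_sum, Cnt]
    rw [hc2]
    have : 0 ≤ q * 2 ^ ℓ - q * (2 * Cnt v F) := by nlinarith [hq]
    linarith
  exact hlow.trans hsum

lemma exists_good_coord (v : Bool) (F : (Fin ℓ → Bool) → Bool) (B : Finset (Fin ℓ))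
    (HB : ∀ r s : Fin ℓ → Bool, (∀ j, j ∉ B → r j = s j) → F r = F s)
    (hcard : B.card < ℓ) (hq : Cnt v F ≤ 2 ^ ℓ / 2) :
    ∃ i : Fin ℓ, i ∉ B ∧ Cnt v F / ((ℓ : ℝ) - B.card) ≤ Jf v F i := by
  classical
  have hcompl : ∑ i ∈ Bᶜ, Jf v F i = ∑ i : Fin ℓ, Jf v F i := by
    refine Finset.sum_subset (Finset.subset_univ _) fun i _ hi => ?_
    exact J_eq_zero v F B HB i (by simpa using hi)
  have hsum : Cnt v F ≤ ∑ i ∈ Bᶜ, Jf v F i := by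
    rw [hcompl]; exact cnt_le_sum_J v F hq
  have hcardc : (Bᶜ : Finset (Fin ℓ)).card = ℓ - B.card := by
    rw [Finset.card_compl, Fintype.card_fin]
  have hne : (Bᶜ : Finset (Fin ℓ)).Nonempty := by
    rw [← Finset.card_pos, hcardc]; omega
  have hlpos : (0:ℝ) < (ℓ:ℝ) - B.card := by
    have : (B.card : ℝ) < (ℓ : ℝ) := by exact_mod_cast hcard
    linarith
  have hconst : ∑ _i ∈ Bᶜ, Cnt v F / ((ℓ : ℝ) - B.card) = Cnt v F := by
    rw [Finset.sum_const, hcardc, nsmul_eq_mul]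
    have h1 : ((ℓ - B.card : ℕ) : ℝ) = (ℓ : ℝ) - B.card := by
      rw [Nat.cast_sub (le_of_lt hcard)]
    rw [h1, mul_div_cancel₀ _ (ne_of_gt hlpos)]
  obtain ⟨i, hi, hle⟩ := Finset.exists_le_of_sum_le
    (f := fun _ => Cnt v F / ((ℓ : ℝ) - B.card)) (g := fun i => Jf v F i) hne
    (by rw [hconst]; exact hsum)
  exact ⟨i, by simpa using hi, hle⟩

lemma play_notin (B : Finset (Fin n)) (σ : Fin n → (Fin n → α) → α) (d : α)
    (r : Fin n → α) (i : Fin n) (h : i ∉ B) : play B σ d r i = r i := by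
  rw [play]; simp [h]

lemma play_empty (σ : Fin n → (Fin n → α) → α) (d : α) (r : Fin n → α) (i : Fin n) :
    play ∅ σ d r i = r i :=
  play_notin ∅ σ d r i (Finset.notMem_empty i)

lemma play_congr_offB (B : Finset (Fin n)) (σ : Fin n → (Fin n → α) → α) (d : α)
    (r s : Fin n → α) (hrs : ∀ j, j ∉ B → r j = s j) :
    ∀ i, play B σ d r i = play B σ d s i := by
  suffices H : ∀ m : ℕ, ∀ i : Fin n, (i : ℕ) < m → play B σ d r i = play B σ d s i by
    exact fun i => H n i i.isLt
  intro m
  induction m with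
  | zero => exact fun i hi => absurd hi (Nat.not_lt_zero _)
  | succ m IH =>
    intro i hi
    rw [play, play]
    by_cases hB : i ∈ B
    · simp only [hB, if_true]
      congr 1
      funext j
      by_cases hj : (j : ℕ) < (i : ℕ)
      · rw [dif_pos hj, dif_pos hj]
        exact IH j (lt_of_lt_of_le hj (Nat.lt_succ_iff.mp hi))
      · rw [dif_neg hj, dif_neg hj]
    · simp only [hB, if_false]
      exact hrs i hB

/-- the bit played at `i` by the strategy `γf` inserted at a fresh coordinate `i`. -/
def ccF (B : Finset (Fin n)) (σ : Fin n → (Fin n → α) → α) (d : α) (i : Fin n)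
    (γf : (Fin n → α) → α) (r : Fin n → α) : α :=
  γf (fun j => if h : (j : ℕ) < (i : ℕ)
    then play (insert i B) (Function.update σ i γf) d r j else d)

lemma play_compose (B : Finset (Fin n)) (σ : Fin n → (Fin n → α) → α) (d : α)
    (i : Fin n) (hiB : i ∉ B) (γf : (Fin n → α) → α) (r : Fin n → α) :
    ∀ j, play (insert i B) (Function.update σ i γf) d r j
      = play B σ d (Function.update r i (ccF B σ d i γf r)) j := by
  set B' := insert i B with hB'
  set σ' := Function.update σ i γf with hσ'
  set r' := Function.update r i (ccF B σ d i γf r) with hr'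
  suffices H : ∀ m : ℕ, ∀ j : Fin n, (j : ℕ) < m → play B' σ' d r j = play B σ d r' j by
    exact fun j => H n j j.isLt
  intro m
  induction m with
  | zero => exact fun j hj => absurd hj (Nat.not_lt_zero _)
  | succ m IH =>
    intro j hj
    rcases eq_or_ne j i with rfl | hne
    · rw [play, play]
      rw [if_pos (Finset.mem_insert_self j B), if_neg hiB]
      rw [hσ', Function.update_self, hr', Function.update_self]
      rfl
    · by_cases hB : j ∈ B
      · rw [play, play]
        rw [if_pos (Finset.mem_insert_of_mem hB), if_pos hB]
        rw [hσ', Function.update_of_ne hne]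
        congr 1
        funext k
        by_cases hk : (k : ℕ) < (j : ℕ)
        · rw [dif_pos hk, dif_pos hk]
          exact IH k (lt_of_lt_of_le hk (Nat.lt_succ_iff.mp hj))
        · rw [dif_neg hk, dif_neg hk]
      · have hB' : j ∉ B' := by
          rw [hB']; simp [hne, hB]
        rw [play_notin B' σ' d r j hB', play_notin B σ d r' j hB]
        rw [hr', Function.update_of_ne hne]

lemma main_ind (hℓ : 0 < ℓ) (f : (Fin ℓ → Bool) → Bool) (v : Bool)
    (hq : Cnt v f ≤ 2 ^ ℓ / 2) :
    ∀ b : ℕ, b ≤ ℓ → ∃ (B : Finset (Fin ℓ)) (σ : Fin ℓ → (Fin ℓ → Bool) → Bool),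
      B.card = b ∧
      Cnt v (fun r => f (play B σ false r)) ≤ (((ℓ : ℝ) - b) / ℓ) * Cnt v f := by
  have hl0 : (0:ℝ) < (ℓ:ℝ) := by exact_mod_cast hℓ
  intro b
  induction b with
  | zero =>
    intro _
    refine ⟨∅, fun _ _ => false, Finset.card_empty, ?_⟩
    have h1 : (fun r => f (play ∅ (fun _ _ => false) false r)) = f := by
      funext r; congr 1; funext j; exact play_empty _ _ _ _
    rw [h1]
    have h2 : ((ℓ:ℝ) - (0:ℕ))/ℓ = 1 := by
      push_cast; rw [sub_zero, div_self (ne_of_gt hl0)]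
    rw [h2, one_mul]
  | succ b IH =>
    intro hb
    obtain ⟨B, σ, hcard, hbound⟩ := IH (Nat.le_of_succ_le hb)
    set F : (Fin ℓ → Bool) → Bool := fun r => f (play B σ false r) with hF
    have HB : ∀ r s : Fin ℓ → Bool, (∀ j, j ∉ B → r j = s j) → F r = F s :=
      fun r s hrs => congrArg f (funext (play_congr_offB B σ false r s hrs))
    have hbR : ((b:ℝ)) < (ℓ:ℝ) := by exact_mod_cast hb
    have hfle : ((ℓ:ℝ) - b)/ℓ ≤ 1 := by
      rw [div_le_one hl0]
      have : (0:ℝ) ≤ (b:ℝ) := Nat.cast_nonneg b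
      linarith
    have hqF : Cnt v F ≤ 2 ^ ℓ / 2 := by
      calc Cnt v F ≤ (((ℓ:ℝ) - b)/ℓ) * Cnt v f := hbound
        _ ≤ 1 * Cnt v f := mul_le_mul_of_nonneg_right hfle (cnt_nonneg v f)
        _ = Cnt v f := one_mul _
        _ ≤ 2 ^ ℓ / 2 := hq
    have hcardlt : B.card < ℓ := by rw [hcard]; omega
    obtain ⟨i, hiB, hJ⟩ := exists_good_coord v F B HB hcardlt hqF
    set γf : (Fin ℓ → Bool) → Bool := fun p => γg v F i (Mask i p) with hγf
    refine ⟨insert i B, Function.update σ i γf, ?_, ?_⟩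
    · rw [Finset.card_insert_of_notMem hiB, hcard]
    · have Hc : ∀ r, ccF B σ false i γf r = γg v F i (Mask i r) := by
        intro r
        have h0 : ccF B σ false i γf r
            = γg v F i (Mask i (fun j => if h : (j:ℕ) < (i:ℕ)
                then play (insert i B) (Function.update σ i γf) false r j else false)) := rfl
        rw [h0]
        refine γg_inv v F B HB i _ _ ?_ (mask_idem i _) (mask_idem i _)
        intro j hj
        by_cases hji : (j:ℕ) < (i:ℕ)
        · have hjB : j ∉ B := fun hh => hj ⟨hji, hh⟩
          have hjB' : j ∉ insert i B := by
            simp only [Finset.mem_insert, not_or]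
            exact ⟨fun e => absurd (e ▸ hji) (lt_irrefl _), hjB⟩
          simp only [Mask, if_pos hji]
          rw [dif_pos hji, play_notin _ _ _ _ _ hjB']
        · simp only [Mask, if_neg hji]
      have hrw : Cnt v (fun r => f (play (insert i B) (Function.update σ i γf) false r))
          = Cnt v (fun r => F (Function.update r i (ccF B σ false i γf r))) := by
        refine Finset.sum_congr rfl fun r _ => ?_
        have h1 : f (play (insert i B) (Function.update σ i γf) false r)
            = F (Function.update r i (ccF B σ false i γf r)) :=
          congrArg f (funext (play_compose B σ false i hiB γf r))
        simp only [h1]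
      rw [hrw, step_identity v F i (ccF B σ false i γf) Hc]
      rw [hcard] at hJ
      have hpos : (0:ℝ) < (ℓ:ℝ) - b := by linarith
      have hCF0 : (0:ℝ) ≤ Cnt v F := cnt_nonneg v F
      have hb1R : ((b:ℝ)) + 1 ≤ (ℓ:ℝ) := by exact_mod_cast hb
      have key : Cnt v F - Jf v F i ≤ Cnt v F * (((ℓ:ℝ) - b - 1)/((ℓ:ℝ) - b)) := by
        have he : Cnt v F - Cnt v F / ((ℓ:ℝ) - b)
            = Cnt v F * (((ℓ:ℝ) - b - 1)/((ℓ:ℝ) - b)) := by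
          field_simp
        linarith [hJ]
      have hratio : (0:ℝ) ≤ ((ℓ:ℝ) - b - 1)/((ℓ:ℝ) - b) :=
        div_nonneg (by linarith) (le_of_lt hpos)
      have hfinal : Cnt v F * (((ℓ:ℝ) - b - 1)/((ℓ:ℝ) - b))
          ≤ (((ℓ:ℝ) - ((b:ℝ)+1))/ℓ) * Cnt v f := by
        calc Cnt v F * (((ℓ:ℝ) - b - 1)/((ℓ:ℝ) - b))
            ≤ ((((ℓ:ℝ) - b)/ℓ) * Cnt v f) * (((ℓ:ℝ) - b - 1)/((ℓ:ℝ) - b)) :=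
              mul_le_mul_of_nonneg_right hbound hratio
          _ = (((ℓ:ℝ) - ((b:ℝ)+1))/ℓ) * Cnt v f := by
              field_simp; ring
      have hcast : ((↑(b+1) : ℝ)) = (b:ℝ) + 1 := by push_cast; ring
      rw [hcast]
      linarith

lemma meanF_eq (f : (Fin ℓ → Bool) → Bool) : meanF f = Cnt true f / 2 ^ ℓ := by
  rw [meanF, Cnt]
  congr 1

lemma meanPlay_eq (f : (Fin ℓ → Bool) → Bool) (B : Finset (Fin ℓ))
    (σ : Fin ℓ → (Fin ℓ → Bool) → Bool) :
    meanPlay f B σ = Cnt true (fun r => f (play B σ false r)) / 2 ^ ℓ := by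
  rw [meanPlay, Cnt]
  congr 1

lemma cnt_false_eq (F : (Fin ℓ → Bool) → Bool) :
    Cnt false F = 2 ^ ℓ - Cnt true F := by
  have h : Cnt false F + Cnt true F = 2 ^ ℓ := by
    rw [Cnt, Cnt, ← Finset.sum_add_distrib]
    have h1 : ∀ y : Fin ℓ → Bool,
        ((if F y = false then (1:ℝ) else 0) + (if F y = true then 1 else 0)) = 1 := by
      intro y; cases h : F y <;> simp [h]
    rw [Finset.sum_congr rfl fun y _ => h1 y, Finset.sum_const, card_univ]
    have : Fintype.card (Fin ℓ → Bool) = 2 ^ ℓ := by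
      rw [Fintype.card_fun, Fintype.card_bool, Fintype.card_fin]
    rw [this]; simp
  linarith

end BOL

open BOL in
/-- Ben-Or–Linial-type lower bound for one-round sequential bit protocols: any coalition of
`b` out of `ℓ` players can bias any Boolean output function by at least
`(b/(2ℓ)) · min(Pr[f=1], Pr[f=0])`; consequently there is no `ε`-extractor for uniform
`(g, ℓ, 1)`-oNOSF sources when `ε < (ℓ-g)/(2ℓ)`. -/
theorem benOrLinial_bias {ℓ : ℕ} (hℓ : 0 < ℓ) (f : (Fin ℓ → Bool) → Bool) :
    (∀ b : ℕ, b ≤ ℓ → ∃ B : Finset (Fin ℓ), B.card = b ∧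
      ∃ σ : Fin ℓ → (Fin ℓ → Bool) → Bool,
        (b : ℝ) / (2 * ℓ) * min (meanF f) (1 - meanF f) ≤ |meanPlay f B σ - meanF f|) ∧
    (∀ (g : ℕ) (ε : ℝ), g ≤ ℓ → 0 ≤ ε → ε < ((ℓ : ℝ) - g) / (2 * ℓ) →
      ¬ (∀ B : Finset (Fin ℓ), B.card ≤ ℓ - g →
          ∀ σ : Fin ℓ → (Fin ℓ → Bool) → Bool, |meanPlay f B σ - 1 / 2| ≤ ε)) := by
  have hl0 : (0:ℝ) < (ℓ:ℝ) := by exact_mod_cast hℓ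
  have h2l : (0:ℝ) < 2 ^ ℓ := by positivity
  have hCle : Cnt true f ≤ 2 ^ ℓ := by
    have h1 := cnt_nonneg false f
    rw [cnt_false_eq] at h1; linarith
  have hC0 : (0:ℝ) ≤ Cnt true f := cnt_nonneg true f
  have hμ0 : (0:ℝ) ≤ meanF f := by rw [meanF_eq]; positivity
  have hμ1 : meanF f ≤ 1 := by
    rw [meanF_eq, div_le_one h2l]; exact hCle
  -- the core: for direction v, get the biased strategy and its key inequality
  have core : ∀ b : ℕ, b ≤ ℓ →
      ∃ (B : Finset (Fin ℓ)) (σ : Fin ℓ → (Fin ℓ → Bool) → Bool), B.card = b ∧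
        ((meanF f ≤ 1/2 ∧ meanPlay f B σ ≤ (((ℓ:ℝ) - b)/ℓ) * meanF f) ∨
         (1/2 ≤ meanF f ∧ 1 - (((ℓ:ℝ) - b)/ℓ) * (1 - meanF f) ≤ meanPlay f B σ)) := by
    intro b hb
    by_cases hμ : meanF f ≤ 1/2
    · have hq : Cnt true f ≤ 2 ^ ℓ / 2 := by
        rw [meanF_eq, div_le_div_iff₀ h2l (by norm_num : (0:ℝ) < 2)] at hμ
        linarith
      obtain ⟨B, σ, hcard, hbound⟩ := main_ind hℓ f true hq b hb
      refine ⟨B, σ, hcard, Or.inl ⟨hμ, ?_⟩⟩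
      rw [meanPlay_eq, meanF_eq, ← mul_div_assoc]
      exact (div_le_div_iff_of_pos_right h2l).mpr hbound
    · push_neg at hμ
      have hq : Cnt false f ≤ 2 ^ ℓ / 2 := by
        rw [cnt_false_eq]
        rw [meanF_eq, lt_div_iff₀ h2l] at hμ
        linarith
      obtain ⟨B, σ, hcard, hbound⟩ := main_ind hℓ f false hq b hb
      refine ⟨B, σ, hcard, Or.inr ⟨le_of_lt hμ, ?_⟩⟩
      rw [cnt_false_eq, cnt_false_eq] at hbound
      rw [meanPlay_eq, meanF_eq, le_div_iff₀ h2l]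
      have hexp : (1 - (((ℓ:ℝ) - b)/ℓ) * (1 - Cnt true f / 2 ^ ℓ)) * 2 ^ ℓ
          = 2 ^ ℓ - (((ℓ:ℝ) - b)/ℓ) * (2 ^ ℓ - Cnt true f) := by
        field_simp
      rw [hexp]
      linarith
  constructor
  · intro b hb
    obtain ⟨B, σ, hcard, hcase⟩ := core b hb
    refine ⟨B, hcard, σ, ?_⟩
    have hbl : (b:ℝ) ≤ (ℓ:ℝ) := by exact_mod_cast hb
    have hb0 : (0:ℝ) ≤ (b:ℝ) := Nat.cast_nonneg b
    have hhalf : (b:ℝ)/(2*ℓ) ≤ (b:ℝ)/ℓ := by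
      have h1 : (b:ℝ)/ℓ - (b:ℝ)/(2*ℓ) = (b:ℝ)/(2*ℓ) := by field_simp; ring
      have h2 : (0:ℝ) ≤ (b:ℝ)/(2*ℓ) := by positivity
      linarith
    rcases hcase with ⟨hμ, hmp⟩ | ⟨hμ, hmp⟩
    · have hmin : min (meanF f) (1 - meanF f) = meanF f := min_eq_left (by linarith)
      rw [hmin]
      have hkey : meanF f - (((ℓ:ℝ) - b)/ℓ) * meanF f = ((b:ℝ)/ℓ) * meanF f := by
        field_simp; ring
      have h1 : (b:ℝ)/(2*ℓ) * meanF f ≤ ((b:ℝ)/ℓ) * meanF f :=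
        mul_le_mul_of_nonneg_right hhalf hμ0
      have h2 : ((b:ℝ)/ℓ) * meanF f ≤ meanF f - meanPlay f B σ := by linarith
      calc (b:ℝ)/(2*ℓ) * meanF f ≤ meanF f - meanPlay f B σ := by linarith
        _ ≤ |meanPlay f B σ - meanF f| := by
            rw [abs_sub_comm]; exact le_abs_self _
    · have hmin : min (meanF f) (1 - meanF f) = 1 - meanF f := min_eq_right (by linarith)
      rw [hmin]
      have h1μ : (0:ℝ) ≤ 1 - meanF f := by linarith
      have hkey : (1 - (((ℓ:ℝ) - b)/ℓ) * (1 - meanF f)) - meanF f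
          = ((b:ℝ)/ℓ) * (1 - meanF f) := by
        field_simp; ring
      have h1 : (b:ℝ)/(2*ℓ) * (1 - meanF f) ≤ ((b:ℝ)/ℓ) * (1 - meanF f) :=
        mul_le_mul_of_nonneg_right hhalf h1μ
      calc (b:ℝ)/(2*ℓ) * (1 - meanF f) ≤ meanPlay f B σ - meanF f := by linarith
        _ ≤ |meanPlay f B σ - meanF f| := le_abs_self _
  · intro g ε hg hε0 hεβ hext
    set b := ℓ - g with hbdef
    have hbl : b ≤ ℓ := Nat.sub_le ℓ g
    have hcastb : ((ℓ:ℝ) - (g:ℝ)) = ((b:ℕ):ℝ) := by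
      rw [hbdef, Nat.cast_sub hg]
    rw [hcastb] at hεβ
    have hblR : ((b:ℕ):ℝ) ≤ (ℓ:ℝ) := by exact_mod_cast hbl
    have hb0 : (0:ℝ) ≤ ((b:ℕ):ℝ) := Nat.cast_nonneg b
    obtain ⟨B, σ, hcard, hcase⟩ := core b hbl
    have hex := hext B (le_of_eq hcard) σ
    have habs := abs_le.mp hex
    have hfac0 : (0:ℝ) ≤ ((ℓ:ℝ) - b)/ℓ := div_nonneg (by linarith) (le_of_lt hl0)
    have hlne : (ℓ:ℝ) ≠ 0 := ne_of_gt hl0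
    have hkey2 : (((ℓ:ℝ) - b)/ℓ) * (1/2) = 1/2 - ((b:ℕ):ℝ)/(2*ℓ) := by
      rw [sub_div, div_self hlne, sub_mul, one_mul, div_mul_div_comm, mul_one,
        mul_comm (ℓ:ℝ) 2]
    rcases hcase with ⟨hμ, hmp⟩ | ⟨hμ, hmp⟩
    · have h1 : meanPlay f B σ ≤ 1/2 - ((b:ℕ):ℝ)/(2*ℓ) := by
        calc meanPlay f B σ ≤ (((ℓ:ℝ) - b)/ℓ) * meanF f := hmp
          _ ≤ (((ℓ:ℝ) - b)/ℓ) * (1/2) := mul_le_mul_of_nonneg_left hμ hfac0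
          _ = 1/2 - ((b:ℕ):ℝ)/(2*ℓ) := hkey2
      linarith [habs.1]
    · have h1 : 1/2 + ((b:ℕ):ℝ)/(2*ℓ) ≤ meanPlay f B σ := by
        have h2 : 1 - meanF f ≤ 1/2 := by linarith
        calc 1/2 + ((b:ℕ):ℝ)/(2*ℓ) = 1 - (((ℓ:ℝ) - b)/ℓ) * (1/2) := by
              rw [hkey2]; ring
          _ ≤ 1 - (((ℓ:ℝ) - b)/ℓ) * (1 - meanF f) := by
              have := mul_le_mul_of_nonneg_left h2 hfac0
              linarith
          _ ≤ meanPlay f B σ := hmp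
      linarith [habs.2]
end
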